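/- arXiv:2402.06431 — 4 statements merged into one kernel-verified Lean document; each statement's English description precedes it below -/
import Mathlib

section
/- Let ξ_θ = √f_θ be square roots of densities of a μ-dominated statistical model (P_θ)_{θ∈Θ}, Θ ⊆ ℝ open, differentiable in L²(μ) at θ₀ with derivative ξ̇_{θ₀}. Then for any statistic T : X → ℝ with |T| ≤ M μ-a.s., the function γ_T(θ) = E_θ[T] = ∫ T f_θ dμ is differentiable at θ₀ with γ'_T(θ₀) = 2 ∫ ξ̇_{θ₀} ξ_{θ₀} T dμ. -/
open MeasureTheory Filter Topology Set

lemma aux_mul_int {X : Type*} [MeasurableSpace X] {μ : Measure X} {u v : X → ℝ}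
    (hu : MemLp u 2 μ) (hv : MemLp v 2 μ) : Integrable (fun x => u x * v x) μ := by
  refine ((hu.integrable_sq.add hv.integrable_sq).div_const 2).mono' (hu.1.mul hv.1) ?_
  filter_upwards with x
  simp only [Pi.add_apply, Real.norm_eq_abs, abs_mul]
  nlinarith [sq_nonneg (|u x| - |v x|), sq_abs (u x), sq_abs (v x), abs_nonneg (u x), abs_nonneg (v x)]

lemma aux_CS {X : Type*} [MeasurableSpace X] {μ : Measure X} {u v : X → ℝ}
    (hu : MemLp u 2 μ) (hv : MemLp v 2 μ) :
    ∫ x, |u x * v x| ∂μ ≤ Real.sqrt (∫ x, u x ^ 2 ∂μ) * Real.sqrt (∫ x, v x ^ 2 ∂μ) := by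
  have h22 : (2 : ℝ).HolderConjugate 2 := ⟨by norm_num, by norm_num, by norm_num⟩
  have h := integral_mul_norm_le_Lp_mul_Lq (μ := μ) h22 (by simpa using hu) (by simpa using hv)
  have e1 : ∀ w : X → ℝ, (∫ x, ‖w x‖ ^ (2:ℝ) ∂μ) = ∫ x, w x ^ 2 ∂μ := by
    intro w
    simp_rw [show ((2:ℝ)) = ((2:ℕ):ℝ) by norm_num, Real.rpow_natCast, Real.norm_eq_abs, sq_abs]
  have e2 : ∀ w : X → ℝ, (∫ x, w x ^ 2 ∂μ) ^ (1/(2:ℝ)) = Real.sqrt (∫ x, w x ^ 2 ∂μ) := by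
    intro w
    rw [Real.sqrt_eq_rpow]
  calc ∫ x, |u x * v x| ∂μ = ∫ x, ‖u x‖ * ‖v x‖ ∂μ := by
        refine integral_congr_ae (Eventually.of_forall fun x => ?_)
        simp [abs_mul]
      _ ≤ _ := h
      _ = _ := by rw [e1 u, e1 v, e2 u, e2 v]

lemma aux_step {X : Type*} [MeasurableSpace X] {μ : Measure X} (g g0 D T : X → ℝ) {Δ : ℝ}
    (hΔ : Δ ≠ 0) (hg : MemLp g 2 μ) (hg0 : MemLp g0 2 μ) (hD : MemLp D 2 μ)
    (hg0sq : ∫ x, g0 x ^ 2 ∂μ = 1)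
    (hT_meas : AEStronglyMeasurable T μ) {M' : ℝ} (hM0 : 0 ≤ M')
    (hT : ∀ᵐ x ∂μ, ‖T x‖ ≤ M') :
    |((∫ x, T x * g x ^ 2 ∂μ) - ∫ x, T x * g0 x ^ 2 ∂μ) / Δ
        - 2 * ∫ x, D x * g0 x * T x ∂μ|
      ≤ 2 * M' * (((∫ x, (g x - g0 x - Δ * D x) ^ 2 ∂μ) / Δ ^ 2) * |Δ|)
        + 2 * M' * (∫ x, D x ^ 2 ∂μ) * |Δ|
        + 2 * M' * Real.sqrt ((∫ x, (g x - g0 x - Δ * D x) ^ 2 ∂μ) / Δ ^ 2) := by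
  set r : X → ℝ := fun x => g x - g0 x - Δ * D x with hr_def
  have hr : MemLp r 2 μ := (hg.sub hg0).sub (hD.const_mul Δ)
  set N := ∫ x, r x ^ 2 ∂μ with hN_def
  set C := ∫ x, D x ^ 2 ∂μ with hC_def
  set L := ∫ x, D x * g0 x * T x ∂μ with hL_def
  have hN : 0 ≤ N := integral_nonneg fun x => sq_nonneg _
  have habs : (0:ℝ) < |Δ| := abs_pos.mpr hΔ
  -- integrability facts
  have iA : Integrable (fun x => T x * (g x - g0 x) ^ 2) μ :=
    ((hg.sub hg0).integrable_sq).bdd_mul hT_meas hT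
  have iB : Integrable (fun x => T x * (r x * g0 x)) μ :=
    (aux_mul_int hr hg0).bdd_mul hT_meas hT
  have iC : Integrable (fun x => T x * (D x * g0 x)) μ :=
    (aux_mul_int hD hg0).bdd_mul hT_meas hT
  have i0 : Integrable (fun x => T x * g0 x ^ 2) μ := hg0.integrable_sq.bdd_mul hT_meas hT
  -- decomposition
  have eq1 : (∫ x, T x * g x ^ 2 ∂μ) =
      (∫ x, T x * (g x - g0 x) ^ 2 ∂μ) + ((∫ x, 2 * (T x * (r x * g0 x)) ∂μ)
        + ((∫ x, (2 * Δ) * (T x * (D x * g0 x)) ∂μ) + ∫ x, T x * g0 x ^ 2 ∂μ)) := by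
    have e0 : (∫ x, T x * g x ^ 2 ∂μ) = ∫ x, T x * (g x - g0 x) ^ 2
        + (2 * (T x * (r x * g0 x)) + ((2 * Δ) * (T x * (D x * g0 x)) + T x * g0 x ^ 2)) ∂μ := by
      refine integral_congr_ae (Filter.Eventually.of_forall fun x => ?_)
      simp only [hr_def]
      ring
    have i2 : Integrable (fun x => 2 * (T x * (r x * g0 x))) μ := iB.const_mul 2
    have i3 : Integrable (fun x => 2 * Δ * (T x * (D x * g0 x))) μ := iC.const_mul (2 * Δ)
    have i34 : Integrable (fun x => 2 * Δ * (T x * (D x * g0 x)) + T x * g0 x ^ 2) μ := i3.add i0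
    have i234 : Integrable
        (fun x => 2 * (T x * (r x * g0 x)) + (2 * Δ * (T x * (D x * g0 x)) + T x * g0 x ^ 2)) μ :=
      i2.add i34
    rw [e0, integral_add iA i234, integral_add i2 i34, integral_add i3 i0]
  have hLalt : (∫ x, T x * (D x * g0 x) ∂μ) = L := by
    rw [hL_def]
    exact integral_congr_ae (Filter.Eventually.of_forall fun x => by ring)
  have main_eq : (∫ x, T x * g x ^ 2 ∂μ) - (∫ x, T x * g0 x ^ 2 ∂μ) - Δ * (2 * L) =
      (∫ x, T x * (g x - g0 x) ^ 2 ∂μ) + 2 * ∫ x, T x * (r x * g0 x) ∂μ := by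
    rw [eq1, integral_const_mul, integral_const_mul, hLalt]
    ring
  -- bounds
  have b1 : |∫ x, T x * (g x - g0 x) ^ 2 ∂μ| ≤ M' * ∫ x, (g x - g0 x) ^ 2 ∂μ := by
    calc |∫ x, T x * (g x - g0 x) ^ 2 ∂μ| ≤ ∫ x, |T x * (g x - g0 x) ^ 2| ∂μ := by
          have h := norm_integral_le_integral_norm (fun x => T x * (g x - g0 x) ^ 2) (μ := μ)
          simp only [Real.norm_eq_abs] at h
          exact h
      _ ≤ ∫ x, M' * (g x - g0 x) ^ 2 ∂μ := by
          refine integral_mono_ae iA.abs ((hg.sub hg0).integrable_sq.const_mul M') ?_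
          filter_upwards [hT] with x hx
          rw [abs_mul, abs_of_nonneg (sq_nonneg (g x - g0 x))]
          exact mul_le_mul_of_nonneg_right (by simpa [Real.norm_eq_abs] using hx) (sq_nonneg _)
      _ = M' * ∫ x, (g x - g0 x) ^ 2 ∂μ := integral_const_mul _ _
  have b2 : (∫ x, (g x - g0 x) ^ 2 ∂μ) ≤ 2 * N + 2 * Δ ^ 2 * C := by
    have : (∫ x, (g x - g0 x) ^ 2 ∂μ) ≤ ∫ x, 2 * r x ^ 2 + 2 * Δ ^ 2 * D x ^ 2 ∂μ := by
      refine integral_mono_ae (hg.sub hg0).integrable_sq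
        ((hr.integrable_sq.const_mul 2).add (hD.integrable_sq.const_mul (2 * Δ ^ 2))) ?_
      filter_upwards with x
      simp only [hr_def]
      nlinarith [sq_nonneg (g x - g0 x - 2 * (Δ * D x))]
    rwa [integral_add (hr.integrable_sq.const_mul 2) (hD.integrable_sq.const_mul (2 * Δ ^ 2)),
      integral_const_mul, integral_const_mul] at this
  have b3 : |∫ x, T x * (r x * g0 x) ∂μ| ≤ M' * Real.sqrt N := by
    calc |∫ x, T x * (r x * g0 x) ∂μ| ≤ ∫ x, |T x * (r x * g0 x)| ∂μ := by
          have h := norm_integral_le_integral_norm (fun x => T x * (r x * g0 x)) (μ := μ)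
          simp only [Real.norm_eq_abs] at h
          exact h
      _ ≤ ∫ x, M' * |r x * g0 x| ∂μ := by
          refine integral_mono_ae iB.abs ((aux_mul_int hr hg0).abs.const_mul M') ?_
          filter_upwards [hT] with x hx
          rw [abs_mul]
          exact mul_le_mul_of_nonneg_right (by simpa [Real.norm_eq_abs] using hx) (abs_nonneg _)
      _ = M' * ∫ x, |r x * g0 x| ∂μ := integral_const_mul _ _
      _ ≤ M' * (Real.sqrt N * Real.sqrt (∫ x, g0 x ^ 2 ∂μ)) :=
          mul_le_mul_of_nonneg_left (aux_CS hr hg0) hM0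
      _ = M' * Real.sqrt N := by rw [hg0sq, Real.sqrt_one, mul_one]
  -- combine
  have key : |((∫ x, T x * g x ^ 2 ∂μ) - ∫ x, T x * g0 x ^ 2 ∂μ) / Δ - 2 * L|
      ≤ (M' * (2 * N + 2 * Δ ^ 2 * C) + 2 * M' * Real.sqrt N) / |Δ| := by
    have e : ((∫ x, T x * g x ^ 2 ∂μ) - ∫ x, T x * g0 x ^ 2 ∂μ) / Δ - 2 * L =
        ((∫ x, T x * g x ^ 2 ∂μ) - (∫ x, T x * g0 x ^ 2 ∂μ) - Δ * (2 * L)) / Δ := by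
      field_simp
    rw [e, abs_div, main_eq]
    refine div_le_div_of_nonneg_right ?_ habs.le
    calc |(∫ x, T x * (g x - g0 x) ^ 2 ∂μ) + 2 * ∫ x, T x * (r x * g0 x) ∂μ|
        ≤ |∫ x, T x * (g x - g0 x) ^ 2 ∂μ| + 2 * |∫ x, T x * (r x * g0 x) ∂μ| := by
          refine (abs_add_le _ _).trans ?_
          rw [abs_mul, abs_two]
      _ ≤ M' * (2 * N + 2 * Δ ^ 2 * C) + 2 * (M' * Real.sqrt N) := by
          refine add_le_add (b1.trans (mul_le_mul_of_nonneg_left b2 hM0))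
            (mul_le_mul_of_nonneg_left b3 (by norm_num))
      _ = M' * (2 * N + 2 * Δ ^ 2 * C) + 2 * M' * Real.sqrt N := by ring
  refine key.trans (le_of_eq ?_)
  have e3 : Real.sqrt (N / Δ ^ 2) = Real.sqrt N / |Δ| := by
    rw [Real.sqrt_div hN, Real.sqrt_sq_eq_abs]
  rw [e3]
  field_simp
  linear_combination (-(M' * ((∫ x, D x ^ 2 ∂μ) * Δ ^ 2 + N))) * sq_abs Δ

/-- differentiability of expectations, Pollard/Ibragimov–Hasminskii:
If the μ-dominated model with densities `f θ` (square roots `ξ θ = √(f θ)`) is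
differentiable in `L²(μ)` at `θ₀ ∈ Θ` with derivative `D`, then for every statistic `T`
bounded by `M` μ-a.s., the mean function `γ_T : θ ↦ ∫ T f_θ dμ` is differentiable at `θ₀`
with derivative `2 ∫ D ξ_{θ₀} T dμ`. -/
theorem stmt_0 {X : Type*} [MeasurableSpace X] (μ : Measure X) [SigmaFinite μ]
    (Θ : Set ℝ) (hΘ : IsOpen Θ) (θ₀ : ℝ) (hθ₀ : θ₀ ∈ Θ)
    (f : ℝ → X → ℝ)
    (hf_meas : Measurable (Function.uncurry f))
    (hf_nonneg : ∀ θ x, 0 ≤ f θ x)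
    (hf_prob : ∀ θ ∈ Θ, ∫ x, f θ x ∂μ = 1)
    (D : X → ℝ) (hD : MemLp D 2 μ)
    (hdiff : Tendsto
      (fun θ => (∫ x, (Real.sqrt (f θ x) - Real.sqrt (f θ₀ x) - (θ - θ₀) * D x) ^ 2 ∂μ)
        / (θ - θ₀) ^ 2) (𝓝[≠] θ₀) (𝓝 0))
    (T : X → ℝ) (hT_meas : Measurable T) (M : ℝ) (hT : ∀ᵐ x ∂μ, |T x| ≤ M) :
    HasDerivAt (fun θ => ∫ x, T x * f θ x ∂μ)
      (2 * ∫ x, D x * Real.sqrt (f θ₀ x) * T x ∂μ) θ₀ := by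
  have hg_meas : ∀ θ, Measurable fun x => Real.sqrt (f θ x) := fun θ =>
    (hf_meas.of_uncurry_left).sqrt
  set M' := max M 0 with hM'def
  have hM'0 : (0:ℝ) ≤ M' := le_max_right _ _
  have hT' : ∀ᵐ x ∂μ, ‖T x‖ ≤ M' := by
    filter_upwards [hT] with x hx
    rw [Real.norm_eq_abs]
    exact hx.trans (le_max_left _ _)
  have hf_int : ∀ θ ∈ Θ, Integrable (f θ) μ := by
    intro θ hθ
    by_contra h
    have h1 := hf_prob θ hθ
    rw [integral_undef h] at h1
    norm_num at h1
  have hg_sq : ∀ θ x, Real.sqrt (f θ x) ^ 2 = f θ x := fun θ x => Real.sq_sqrt (hf_nonneg θ x)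
  have hgL2 : ∀ θ ∈ Θ, MemLp (fun x => Real.sqrt (f θ x)) 2 μ := by
    intro θ hθ
    rw [memLp_two_iff_integrable_sq ((hg_meas θ).aestronglyMeasurable)]
    simp only [hg_sq]
    exact hf_int θ hθ
  have hg0 : MemLp (fun x => Real.sqrt (f θ₀ x)) 2 μ := hgL2 θ₀ hθ₀
  have hg0sq : ∫ x, Real.sqrt (f θ₀ x) ^ 2 ∂μ = 1 := by
    simp only [hg_sq]; exact hf_prob θ₀ hθ₀
  have hγ : ∀ θ ∈ Θ, (∫ x, T x * f θ x ∂μ) = ∫ x, T x * Real.sqrt (f θ x) ^ 2 ∂μ := by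
    intro θ hθ
    exact integral_congr_ae (Filter.Eventually.of_forall fun x => by simp only [hg_sq])
  rw [hasDerivAt_iff_tendsto_slope, tendsto_iff_dist_tendsto_zero]
  set q : ℝ → ℝ := fun θ =>
      (∫ x, (Real.sqrt (f θ x) - Real.sqrt (f θ₀ x) - (θ - θ₀) * D x) ^ 2 ∂μ) / (θ - θ₀) ^ 2
    with hq_def
  have hmem : ∀ᶠ θ in 𝓝[≠] θ₀, θ ∈ Θ := mem_nhdsWithin_of_mem_nhds (hΘ.mem_nhds hθ₀)
  have hne : ∀ᶠ θ in 𝓝[≠] θ₀, θ ≠ θ₀ := by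
    have := self_mem_nhdsWithin (a := θ₀) (s := ({θ₀}ᶜ : Set ℝ))
    filter_upwards [this] with θ hθ
    exact hθ
  have key : ∀ᶠ θ in 𝓝[≠] θ₀,
      dist (slope (fun θ => ∫ x, T x * f θ x ∂μ) θ₀ θ)
        (2 * ∫ x, D x * Real.sqrt (f θ₀ x) * T x ∂μ)
      ≤ 2 * M' * (q θ * |θ - θ₀|) + 2 * M' * (∫ x, D x ^ 2 ∂μ) * |θ - θ₀|
        + 2 * M' * Real.sqrt (q θ) := by
    filter_upwards [hmem, hne] with θ hθΘ hθne
    have hΔ : θ - θ₀ ≠ 0 := sub_ne_zero.mpr hθne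
    have h := aux_step (μ := μ) (fun x => Real.sqrt (f θ x)) (fun x => Real.sqrt (f θ₀ x)) D T
      hΔ (hgL2 θ hθΘ) hg0 hD hg0sq hT_meas.aestronglyMeasurable hM'0 hT'
    rw [Real.dist_eq, slope_def_field, hγ θ hθΘ, hγ θ₀ hθ₀]
    exact h
  have hq0 : Tendsto q (𝓝[≠] θ₀) (𝓝 0) := hdiff
  have habs : Tendsto (fun θ : ℝ => |θ - θ₀|) (𝓝[≠] θ₀) (𝓝 0) := by
    have h1 : Tendsto (fun θ : ℝ => |θ - θ₀|) (𝓝 θ₀) (𝓝 |θ₀ - θ₀|) :=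
      ((continuous_id.sub continuous_const).abs).tendsto θ₀
    simpa using h1.mono_left nhdsWithin_le_nhds
  have hb : Tendsto (fun θ => 2 * M' * (q θ * |θ - θ₀|) + 2 * M' * (∫ x, D x ^ 2 ∂μ) * |θ - θ₀|
      + 2 * M' * Real.sqrt (q θ)) (𝓝[≠] θ₀) (𝓝 0) := by
    have h1 : Tendsto (fun θ => 2 * M' * (q θ * |θ - θ₀|)) (𝓝[≠] θ₀) (𝓝 (2 * M' * (0 * 0))) :=
      tendsto_const_nhds.mul (hq0.mul habs)
    have h2 : Tendsto (fun θ => 2 * M' * (∫ x, D x ^ 2 ∂μ) * |θ - θ₀|) (𝓝[≠] θ₀)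
        (𝓝 (2 * M' * (∫ x, D x ^ 2 ∂μ) * 0)) := tendsto_const_nhds.mul habs
    have h3 : Tendsto (fun θ => 2 * M' * Real.sqrt (q θ)) (𝓝[≠] θ₀)
        (𝓝 (2 * M' * Real.sqrt 0)) :=
      tendsto_const_nhds.mul ((Real.continuous_sqrt.tendsto 0).comp hq0)
    have h := (h1.add h2).add h3
    simpa using h
  exact squeeze_zero' (Filter.Eventually.of_forall fun θ => dist_nonneg) key hb
end

section
/- Intermediate Cramér–Rao inequality: under the same hypotheses, E_{θ₀}[T²] ≥ (γ'_T(θ₀))² / I(θ₀) whenever I(θ₀) > 0. -/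
open MeasureTheory Filter Topology Set

lemma cs_integral {X : Type*} [MeasurableSpace X] {μ : Measure X} {a b : X → ℝ}
    (ha : MemLp a 2 μ) (hb : MemLp b 2 μ) :
    (∫ x, a x * b x ∂μ) ^ 2 ≤ (∫ x, a x ^ 2 ∂μ) * (∫ x, b x ^ 2 ∂μ) := by
  set A : Lp ℝ 2 μ := ha.toLp a
  set B : Lp ℝ 2 μ := hb.toLp b
  have hA : (fun x => (A : X → ℝ) x) =ᵐ[μ] a := ha.coeFn_toLp
  have hB : (fun x => (B : X → ℝ) x) =ᵐ[μ] b := hb.coeFn_toLp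
  have h1 : (inner ℝ A B : ℝ) = ∫ x, a x * b x ∂μ := by
    rw [MeasureTheory.L2.inner_def]
    refine integral_congr_ae ?_
    filter_upwards [hA, hB] with x hxa hxb
    simp [hxa, hxb, mul_comm]
  have h2 : (inner ℝ A A : ℝ) = ∫ x, a x ^ 2 ∂μ := by
    rw [MeasureTheory.L2.inner_def]
    refine integral_congr_ae ?_
    filter_upwards [hA] with x hxa
    simp [hxa, sq]
  have h3 : (inner ℝ B B : ℝ) = ∫ x, b x ^ 2 ∂μ := by
    rw [MeasureTheory.L2.inner_def]
    refine integral_congr_ae ?_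
    filter_upwards [hB] with x hxb
    simp [hxb, sq]
  have := real_inner_mul_inner_self_le A B
  rw [h1, h2, h3] at this
  simpa [sq] using this

/-- intermediate Cramér–Rao inequality: under the same hypotheses,
`E_{θ₀}[T²] ≥ (γ'_T(θ₀))² / I(θ₀)` whenever `I(θ₀) > 0`, where
`γ'_T(θ₀) = 2 ∫ ξ̇_{θ₀} ξ_{θ₀} T dμ`. -/
theorem stmt_4 {X : Type*} [MeasurableSpace X] (μ : Measure X) [SigmaFinite μ]
    (Θ : Set ℝ) (hΘ : IsOpen Θ) (θ₀ : ℝ) (hθ₀ : θ₀ ∈ Θ)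
    (f : ℝ → X → ℝ)
    (hf_meas : Measurable (Function.uncurry f))
    (hf_nonneg : ∀ θ x, 0 ≤ f θ x)
    (hf_prob : ∀ θ ∈ Θ, ∫ x, f θ x ∂μ = 1)
    (D : X → ℝ) (hD : MemLp D 2 μ)
    (hdiff : Tendsto
      (fun θ => (∫ x, (Real.sqrt (f θ x) - Real.sqrt (f θ₀ x) - (θ - θ₀) * D x) ^ 2 ∂μ)
        / (θ - θ₀) ^ 2) (𝓝[≠] θ₀) (𝓝 0))
    (hI : 0 < 4 * ∫ x, D x ^ 2 ∂μ)
    (T : X → ℝ) (hT_meas : Measurable T) (M : ℝ) (hT : ∀ᵐ x ∂μ, |T x| ≤ M) :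
    (∫ x, T x ^ 2 * f θ₀ x ∂μ)
      ≥ (2 * ∫ x, D x * Real.sqrt (f θ₀ x) * T x ∂μ) ^ 2
        / (4 * ∫ x, D x ^ 2 ∂μ) := by
  -- f θ₀ is integrable since its integral is 1 ≠ 0
  have hf_int : Integrable (f θ₀) μ := by
    by_contra h
    have := integral_undef h
    rw [hf_prob θ₀ hθ₀] at this
    norm_num at this
  have hfmeas : Measurable (f θ₀) := by
    have : Measurable fun x => Function.uncurry f (θ₀, x) := hf_meas.comp measurable_prodMk_left
    exact this
  -- √(f θ₀) ∈ L²
  have hsqrt_mem : MemLp (fun x => Real.sqrt (f θ₀ x)) 2 μ := by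
    rw [memLp_two_iff_integrable_sq (hfmeas.sqrt.aestronglyMeasurable)]
    refine hf_int.congr ?_
    refine Eventually.of_forall fun x => ?_
    simp [Real.sq_sqrt (hf_nonneg θ₀ x)]
  -- b := √(f θ₀) * T ∈ L²
  set b : X → ℝ := fun x => Real.sqrt (f θ₀ x) * T x with hb_def
  have hb_mem : MemLp b 2 μ := by
    have hsm : MemLp (fun x => |M| * Real.sqrt (f θ₀ x)) 2 μ := hsqrt_mem.const_mul _
    refine MemLp.of_le hsm (hfmeas.sqrt.mul hT_meas).aestronglyMeasurable ?_
    filter_upwards [hT] with x hx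
    have h0 : (0:ℝ) ≤ Real.sqrt (f θ₀ x) := Real.sqrt_nonneg _
    have : |Real.sqrt (f θ₀ x) * T x| ≤ Real.sqrt (f θ₀ x) * |M| := by
      rw [abs_mul, abs_of_nonneg h0]
      exact mul_le_mul_of_nonneg_left (hx.trans (le_abs_self M)) h0
    simpa [b, Real.norm_eq_abs, abs_mul, abs_of_nonneg h0, mul_comm] using this
  -- Cauchy–Schwarz
  have hcs := cs_integral hD hb_mem
  have hb_sq : (∫ x, b x ^ 2 ∂μ) = ∫ x, T x ^ 2 * f θ₀ x ∂μ := by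
    refine integral_congr_ae (Eventually.of_forall fun x => ?_)
    simp only [hb_def]
    rw [mul_pow, Real.sq_sqrt (hf_nonneg θ₀ x)]
    ring
  have hint_eq : (∫ x, D x * b x ∂μ) = ∫ x, D x * Real.sqrt (f θ₀ x) * T x ∂μ := by
    refine integral_congr_ae (Eventually.of_forall fun x => ?_)
    simp [hb_def, mul_assoc]
  rw [hb_sq, hint_eq] at hcs
  -- conclude by arithmetic
  set I := ∫ x, D x * Real.sqrt (f θ₀ x) * T x ∂μ
  set J := ∫ x, D x ^ 2 ∂μ
  set K := ∫ x, T x ^ 2 * f θ₀ x ∂μ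
  rw [ge_iff_le, div_le_iff₀ hI]
  calc (2 * I) ^ 2 = 4 * I ^ 2 := by ring
    _ ≤ 4 * (J * K) := by linarith
    _ = K * (4 * J) := by ring
end

section
/- Multivariate Stokes-type lemma (Lemma on vanishing integral of a partial derivative): let D ⊆ ℝ^d be open, φ : D → ℝ nice (i.e., absolutely continuous in each coordinate for a.e. values of the other coordinates), with ∫_D |φ| dm < ∞ and ∫_D |∂_i φ| dm < ∞ for a fixed coordinate i, and suppose φ(u) → 0 as u approaches any finite-norm boundary point of D along the i-th canonical direction. Let S be open such that for a.e. u_{−i}, φ(u_i, u_{−i}) → 0 as u_i approaches a boundary point of S interior to the slice D(u_{−i}). Then ∫_{D ∩ S} ∂_i φ dm = 0. -/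
open MeasureTheory Filter Topology Set
open scoped ENNReal NNReal


lemma lim_zero_atTop {f : ℝ → ℝ} {x₀ L : ℝ}
    (hf : IntegrableOn f (Set.Ioi x₀)) (h : Tendsto f atTop (𝓝 L)) : L = 0 := by
  by_contra hL
  have hε : (0:ℝ) < |L|/2 := by positivity
  have hev : ∀ᶠ t in atTop, |L|/2 < |f t| :=
    (h.abs).eventually_const_lt (by linarith [abs_pos.mpr hL])
  obtain ⟨M, hM⟩ := hev.exists_forall_of_atTop
  set M' := max M x₀ with hM'
  have hint : IntegrableOn f (Set.Ioi M') := hf.mono_set (Set.Ioi_subset_Ioi (le_max_right _ _))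
  have hfin := hint.hasFiniteIntegral
  rw [HasFiniteIntegral] at hfin
  have hbound : ∫⁻ t in Set.Ioi M', ENNReal.ofReal (|L|/2) ∂volume
      ≤ ∫⁻ t in Set.Ioi M', (‖f t‖₊ : ℝ≥0∞) ∂volume := by
    refine lintegral_mono_ae ((ae_restrict_iff' measurableSet_Ioi).2 (ae_of_all _ ?_))
    intro t ht
    show _ ≤ ‖f t‖ₑ
    rw [Real.enorm_eq_ofReal_abs]
    exact ENNReal.ofReal_le_ofReal (le_of_lt (hM t (le_trans (le_max_left _ _) (le_of_lt ht))))
  rw [setLIntegral_const, Real.volume_Ioi, ENNReal.mul_top (by simpa using hε.ne')] at hbound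
  exact absurd (lt_of_le_of_lt hbound hfin) (by simp)

lemma lim_zero_atBot {f : ℝ → ℝ} {x₀ L : ℝ}
    (hf : IntegrableOn f (Set.Iio x₀) volume) (h : Tendsto f atBot (𝓝 L)) : L = 0 := by
  by_contra hL
  have hε : (0:ℝ) < |L|/2 := by positivity
  have hev : ∀ᶠ t in atBot, |L|/2 < |f t| :=
    (h.abs).eventually_const_lt (by linarith [abs_pos.mpr hL])
  obtain ⟨M, hM⟩ := hev.exists_forall_of_atBot
  set M' := min M x₀ with hM'
  have hint : IntegrableOn f (Set.Iio M') := hf.mono_set (Set.Iio_subset_Iio (min_le_right _ _))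
  have hfin := hint.hasFiniteIntegral
  rw [HasFiniteIntegral] at hfin
  have hbound : ∫⁻ t in Set.Iio M', ENNReal.ofReal (|L|/2) ∂volume
      ≤ ∫⁻ t in Set.Iio M', (‖f t‖₊ : ℝ≥0∞) ∂volume := by
    refine lintegral_mono_ae ((ae_restrict_iff' measurableSet_Iio).2 (ae_of_all _ ?_))
    intro t ht
    show _ ≤ ‖f t‖ₑ
    rw [Real.enorm_eq_ofReal_abs]
    exact ENNReal.ofReal_le_ofReal (le_of_lt (hM t (le_of_lt (lt_of_lt_of_le ht (min_le_left _ _)))))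
  rw [setLIntegral_const, Real.volume_Iio, ENNReal.mul_top (by simpa using hε.ne')] at hbound
  exact absurd (lt_of_le_of_lt hbound hfin) (by simp)
lemma right_seq {f g : ℝ → ℝ} {C : Set ℝ}
    (hCo : IsOpen C) (hCc : C.OrdConnected) {x₀ : ℝ} (hx₀ : x₀ ∈ C)
    (hg : IntegrableOn g C volume) (hf : IntegrableOn f C volume)
    (hFTC : ∀ c₁ c₂ : ℝ, c₁ ≤ c₂ → Set.Icc c₁ c₂ ⊆ C →
      IntervalIntegrable g volume c₁ c₂ ∧ f c₂ - f c₁ = ∫ t in c₁..c₂, g t)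
    (hbd : ∀ t₀ ∈ frontier C, Tendsto f (𝓝[C] t₀) (𝓝 0)) :
    ∃ dseq : ℕ → ℝ, (∀ n, dseq n ∈ C) ∧ (∀ n, x₀ ≤ dseq n) ∧
      (∀ t ∈ C, ∀ᶠ n in atTop, t ≤ dseq n) ∧
      Tendsto (fun n => f (dseq n)) atTop (𝓝 0) := by
  by_cases hb : BddAbove C
  · set b := sSup C with hbdef
    have hxb : x₀ < b := by
      obtain ⟨ε, hε, hball⟩ := Metric.isOpen_iff.1 hCo x₀ hx₀
      have hmem : x₀ + ε/2 ∈ C := hball (by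
        simp only [Metric.mem_ball, Real.dist_eq, add_sub_cancel_left]
        exact abs_lt.2 ⟨by linarith, by linarith⟩)
      calc x₀ < x₀ + ε/2 := by linarith
        _ ≤ b := le_csSup hb hmem
    have hbC : b ∉ C := by
      intro hbC
      obtain ⟨ε, hε, hball⟩ := Metric.isOpen_iff.1 hCo b hbC
      have hmem : b + ε/2 ∈ C := hball (by
        simp only [Metric.mem_ball, Real.dist_eq, add_sub_cancel_left]
        exact abs_lt.2 ⟨by linarith, by linarith⟩)
      linarith [le_csSup hb hmem]
    have hstep : ∀ n : ℕ, max (b - 1/(n+1)) x₀ < b := by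
      intro n
      have h1 : (0:ℝ) < 1/(n+1) := by positivity
      exact max_lt (by linarith) hxb
    choose dseq hmem hlt using fun n : ℕ => exists_lt_of_lt_csSup ⟨x₀, hx₀⟩ (hstep n)
    have hdle : ∀ n, dseq n ≤ b := fun n => le_csSup hb (hmem n)
    have hlow : ∀ n : ℕ, b - 1/(n+1) < dseq n := fun n =>
      lt_of_le_of_lt (le_max_left _ _) (hlt n)
    have hone : Tendsto (fun n : ℕ => b - 1/(n+1)) atTop (𝓝 b) := by
      simpa using tendsto_const_nhds.sub (tendsto_one_div_add_atTop_nhds_zero_nat (𝕜 := ℝ))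
    have hdtend : Tendsto dseq atTop (𝓝 b) :=
      tendsto_of_tendsto_of_tendsto_of_le_of_le hone tendsto_const_nhds
        (fun n => le_of_lt (hlow n)) hdle
    have hfront : b ∈ frontier C := by
      rw [hCo.frontier_eq]
      exact ⟨mem_closure_of_tendsto hdtend (.of_forall hmem), hbC⟩
    refine ⟨dseq, hmem, fun n => le_of_lt (lt_of_le_of_lt (le_max_right _ _) (hlt n)), ?_, ?_⟩
    · intro t ht
      have htb : t < b := lt_of_le_of_ne (le_csSup hb ht) (fun e => hbC (e ▸ ht))
      filter_upwards [tendsto_one_div_add_atTop_nhds_zero_nat.eventually_lt_const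
        (show (0:ℝ) < b - t by linarith)] with n hn
      have : t < b - 1/(n+1) := by linarith
      exact le_of_lt (lt_trans this (hlow n))
    · exact (hbd b hfront).comp (tendsto_nhdsWithin_iff.2 ⟨hdtend, .of_forall hmem⟩)
  · choose F hFmem hFlt using not_bddAbove_iff.1 hb
    set dseq : ℕ → ℝ := fun n => F (max n x₀) with hdseq
    have hmem : ∀ n, dseq n ∈ C := fun n => hFmem _
    have hge : ∀ n, x₀ ≤ dseq n := fun n => le_of_lt (lt_of_le_of_lt (le_max_right _ _) (hFlt _))
    have hgen : ∀ n : ℕ, (n:ℝ) < dseq n := fun n => lt_of_le_of_lt (le_max_left _ _) (hFlt _)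
    have hIoi : Set.Ioi x₀ ⊆ C := by
      intro t ht
      exact hCc.out hx₀ (hFmem t) ⟨le_of_lt ht, le_of_lt (hFlt t)⟩
    have hsub : ∀ d : ℝ, x₀ ≤ d → Set.Icc x₀ d ⊆ C := by
      intro d hd t ⟨h1, h2⟩
      rcases eq_or_lt_of_le h1 with h | h
      · exact h ▸ hx₀
      · exact hIoi h
    have hfd : ∀ᶠ d in atTop, f x₀ + ∫ t in x₀..d, g t = f d := by
      filter_upwards [eventually_ge_atTop x₀] with d hd
      have := (hFTC x₀ d hd (hsub d hd)).2
      linarith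
    have key : Tendsto (fun d : ℝ => ∫ t in x₀..d, g t) atTop (𝓝 (∫ t in Set.Ioi x₀, g t)) :=
      MeasureTheory.intervalIntegral_tendsto_integral_Ioi x₀ (hg.mono_set hIoi) tendsto_id
    have hflim : Tendsto f atTop (𝓝 (f x₀ + ∫ t in Set.Ioi x₀, g t)) :=
      Tendsto.congr' hfd (tendsto_const_nhds.add key)
    have hL := lim_zero_atTop (hf.mono_set hIoi) hflim
    have hdat : Tendsto dseq atTop atTop :=
      tendsto_atTop_mono (fun n => le_of_lt (hgen n)) tendsto_natCast_atTop_atTop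
    exact ⟨dseq, hmem, hge, fun t _ => tendsto_atTop.1 hdat t,
      by simpa [hL, Function.comp_def] using hflim.comp hdat⟩
lemma left_seq {f g : ℝ → ℝ} {C : Set ℝ}
    (hCo : IsOpen C) (hCc : C.OrdConnected) {x₀ : ℝ} (hx₀ : x₀ ∈ C)
    (hg : IntegrableOn g C volume) (hf : IntegrableOn f C volume)
    (hFTC : ∀ c₁ c₂ : ℝ, c₁ ≤ c₂ → Set.Icc c₁ c₂ ⊆ C →
      IntervalIntegrable g volume c₁ c₂ ∧ f c₂ - f c₁ = ∫ t in c₁..c₂, g t)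
    (hbd : ∀ t₀ ∈ frontier C, Tendsto f (𝓝[C] t₀) (𝓝 0)) :
    ∃ cseq : ℕ → ℝ, (∀ n, cseq n ∈ C) ∧ (∀ n, cseq n ≤ x₀) ∧
      (∀ t ∈ C, ∀ᶠ n in atTop, cseq n < t) ∧
      Tendsto (fun n => f (cseq n)) atTop (𝓝 0) := by
  by_cases hb : BddBelow C
  · set a := sInf C with hadef
    have hxa : a < x₀ := by
      obtain ⟨ε, hε, hball⟩ := Metric.isOpen_iff.1 hCo x₀ hx₀
      have hmem : x₀ - ε/2 ∈ C := hball (by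
        simp only [Metric.mem_ball, Real.dist_eq, sub_sub_cancel_left]
        exact abs_lt.2 ⟨by linarith, by linarith⟩)
      calc a ≤ x₀ - ε/2 := csInf_le hb hmem
        _ < x₀ := by linarith
    have haC : a ∉ C := by
      intro haC
      obtain ⟨ε, hε, hball⟩ := Metric.isOpen_iff.1 hCo a haC
      have hmem : a - ε/2 ∈ C := hball (by
        simp only [Metric.mem_ball, Real.dist_eq, sub_sub_cancel_left]
        exact abs_lt.2 ⟨by linarith, by linarith⟩)
      linarith [csInf_le hb hmem]
    have hstep : ∀ n : ℕ, a < min (a + 1/(n+1)) x₀ := by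
      intro n
      have h1 : (0:ℝ) < 1/(n+1) := by positivity
      exact lt_min (by linarith) hxa
    choose cseq hmem hlt using fun n : ℕ => exists_lt_of_csInf_lt ⟨x₀, hx₀⟩ (hstep n)
    have hcge : ∀ n, a ≤ cseq n := fun n => csInf_le hb (hmem n)
    have hcup : ∀ n : ℕ, cseq n < a + 1/(n+1) := fun n =>
      lt_of_lt_of_le (hlt n) (min_le_left _ _)
    have hone : Tendsto (fun n : ℕ => a + 1/(n+1)) atTop (𝓝 a) := by
      simpa using tendsto_const_nhds.add (tendsto_one_div_add_atTop_nhds_zero_nat (𝕜 := ℝ))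
    have hctend : Tendsto cseq atTop (𝓝 a) :=
      tendsto_of_tendsto_of_tendsto_of_le_of_le tendsto_const_nhds hone
        hcge (fun n => le_of_lt (hcup n))
    have hfront : a ∈ frontier C := by
      rw [hCo.frontier_eq]
      exact ⟨mem_closure_of_tendsto hctend (.of_forall hmem), haC⟩
    refine ⟨cseq, hmem, fun n => le_of_lt (lt_of_lt_of_le (hlt n) (min_le_right _ _)), ?_, ?_⟩
    · intro t ht
      have hta : a < t := lt_of_le_of_ne (csInf_le hb ht) (fun e => haC (e ▸ ht))
      filter_upwards [tendsto_one_div_add_atTop_nhds_zero_nat.eventually_lt_const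
        (show (0:ℝ) < t - a by linarith)] with n hn
      calc cseq n < a + 1/(n+1) := hcup n
        _ < t := by linarith
    · exact (hbd a hfront).comp (tendsto_nhdsWithin_iff.2 ⟨hctend, .of_forall hmem⟩)
  · choose F hFmem hFlt using not_bddBelow_iff.1 hb
    set cseq : ℕ → ℝ := fun n => F (min (-(n:ℝ)) x₀) with hcseq
    have hmem : ∀ n, cseq n ∈ C := fun n => hFmem _
    have hle : ∀ n, cseq n ≤ x₀ := fun n => le_of_lt (lt_of_lt_of_le (hFlt _) (min_le_right _ _))
    have hgen : ∀ n : ℕ, cseq n < -(n:ℝ) := fun n => lt_of_lt_of_le (hFlt _) (min_le_left _ _)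
    have hIio : Set.Iio x₀ ⊆ C := by
      intro t ht
      exact hCc.out (hFmem t) hx₀ ⟨le_of_lt (hFlt t), le_of_lt ht⟩
    have hIic : Set.Iic x₀ ⊆ C := by
      intro t ht
      rcases eq_or_lt_of_le (mem_Iic.1 ht) with h | h
      · exact h ▸ hx₀
      · exact hIio h
    have hfd : ∀ᶠ d in atBot, f x₀ - ∫ t in d..x₀, g t = f d := by
      filter_upwards [eventually_le_atBot x₀] with d hd
      have hsub : Set.Icc d x₀ ⊆ C := fun t htt => hIic (mem_Iic.2 htt.2)
      have := (hFTC d x₀ hd hsub).2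
      linarith
    have key : Tendsto (fun d : ℝ => ∫ t in d..x₀, g t) atBot (𝓝 (∫ t in Set.Iic x₀, g t)) :=
      MeasureTheory.intervalIntegral_tendsto_integral_Iic x₀ (hg.mono_set hIic) tendsto_id
    have hflim : Tendsto f atBot (𝓝 (f x₀ - ∫ t in Set.Iic x₀, g t)) :=
      Tendsto.congr' hfd (tendsto_const_nhds.sub key)
    have hL := lim_zero_atBot (hf.mono_set hIio) hflim
    have hdat : Tendsto cseq atTop atBot := by
      apply tendsto_atBot_mono (fun n => le_of_lt (hgen n))
      exact tendsto_neg_atBot_iff.2 tendsto_natCast_atTop_atTop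
    exact ⟨cseq, hmem, hle, fun t _ => (tendsto_atBot.1 hdat (t-1)).mono
        (fun n h => by linarith),
      by simpa [hL, Function.comp_def] using hflim.comp hdat⟩
lemma comp_zero {f g : ℝ → ℝ} {C : Set ℝ}
    (hCo : IsOpen C) (hCc : C.OrdConnected) {x₀ : ℝ} (hx₀ : x₀ ∈ C)
    (hg : IntegrableOn g C volume) (hf : IntegrableOn f C volume)
    (hFTC : ∀ c₁ c₂ : ℝ, c₁ ≤ c₂ → Set.Icc c₁ c₂ ⊆ C →
      IntervalIntegrable g volume c₁ c₂ ∧ f c₂ - f c₁ = ∫ t in c₁..c₂, g t)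
    (hbd : ∀ t₀ ∈ frontier C, Tendsto f (𝓝[C] t₀) (𝓝 0)) :
    ∫ t in C, g t = 0 := by
  obtain ⟨dseq, hdmem, hdge, hdev, hdlim⟩ := right_seq hCo hCc hx₀ hg hf hFTC hbd
  obtain ⟨cseq, hcmem, hcle, hcev, hclim⟩ := left_seq hCo hCc hx₀ hg hf hFTC hbd
  have hcd : ∀ n, cseq n ≤ dseq n := fun n => le_trans (hcle n) (hdge n)
  have hIcc : ∀ n, Set.Icc (cseq n) (dseq n) ⊆ C := fun n => hCc.out (hcmem n) (hdmem n)
  have hIoc : ∀ n, Set.Ioc (cseq n) (dseq n) ⊆ C := fun n =>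
    fun t ht => hIcc n ⟨le_of_lt ht.1, ht.2⟩
  -- the interval integrals equal f dₙ - f cₙ
  have hval : ∀ n, ∫ t in (cseq n)..(dseq n), g t = f (dseq n) - f (cseq n) := fun n =>
    ((hFTC _ _ (hcd n) (hIcc n)).2).symm
  -- tendsto to ∫ over C by dominated convergence
  have hCm : MeasurableSet C := hCo.measurableSet
  have htendC : Tendsto (fun n => ∫ t in (cseq n)..(dseq n), g t) atTop (𝓝 (∫ t in C, g t)) := by
    have heq : ∀ n, ∫ t in (cseq n)..(dseq n), g t
        = ∫ t, (Set.Ioc (cseq n) (dseq n)).indicator g t := by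
      intro n
      rw [intervalIntegral.integral_of_le (hcd n), integral_indicator measurableSet_Ioc]
    have heqC : ∫ t in C, g t = ∫ t, C.indicator g t := (integral_indicator hCm).symm
    rw [heqC]
    simp_rw [heq]
    apply tendsto_integral_of_dominated_convergence (bound := C.indicator (fun t => |g t|))
    · intro n
      exact ((integrable_indicator_iff measurableSet_Ioc).2
        (hg.mono_set (hIoc n))).aestronglyMeasurable
    · exact (integrable_indicator_iff hCm).2 hg.abs
    · intro n
      refine ae_of_all _ (fun t => ?_)
      by_cases ht : t ∈ Set.Ioc (cseq n) (dseq n)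
      · rw [Set.indicator_of_mem ht, Set.indicator_of_mem (hIoc n ht)]
        exact le_of_eq (Real.norm_eq_abs _)
      · rw [Set.indicator_of_notMem ht]
        simpa using Set.indicator_nonneg (fun t _ => abs_nonneg (g t)) t
    · refine ae_of_all _ (fun t => ?_)
      by_cases ht : t ∈ C
      · rw [Set.indicator_of_mem ht]
        refine tendsto_const_nhds.congr' ?_
        filter_upwards [hcev t ht, hdev t ht] with n h1 h2
        rw [Set.indicator_of_mem (Set.mem_Ioc.2 ⟨h1, h2⟩)]
      · rw [Set.indicator_of_notMem ht]
        refine tendsto_const_nhds.congr (fun n => ?_)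
        rw [Set.indicator_of_notMem (fun hmem => ht (hIoc n hmem))]
  have htend0 : Tendsto (fun n => ∫ t in (cseq n)..(dseq n), g t) atTop (𝓝 0) := by
    simp_rw [hval]
    simpa using hdlim.sub hclim
  exact tendsto_nhds_unique htendC htend0
lemma oneD {A B : Set ℝ} (hA : IsOpen A) (hB : IsOpen B) {f g : ℝ → ℝ}
    (hf : IntegrableOn f A volume) (hg : IntegrableOn g A volume)
    (hFTC : ∀ c₁ c₂ : ℝ, c₁ ≤ c₂ → Set.Icc c₁ c₂ ⊆ A →
      IntervalIntegrable g volume c₁ c₂ ∧ f c₂ - f c₁ = ∫ t in c₁..c₂, g t)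
    (hbdA : ∀ t₀ ∈ frontier A, Tendsto f (𝓝[A] t₀) (𝓝 0))
    (hbdB : ∀ t₀ : ℝ, t₀ ∈ frontier B → t₀ ∈ A → Tendsto f (𝓝[A ∩ B] t₀) (𝓝 0)) :
    ∫ t in A ∩ B, g t = 0 := by
  set U := A ∩ B with hUdef
  have hU : IsOpen U := hA.inter hB
  -- each component has zero integral
  have hcompsub : ∀ x ∈ U, connectedComponentIn U x ⊆ U := fun x _ => connectedComponentIn_subset U x
  have hcomp0 : ∀ x ∈ U, ∫ t in connectedComponentIn U x, g t = 0 := by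
    intro x hx
    set C := connectedComponentIn U x with hCdef
    have hCsub : C ⊆ U := connectedComponentIn_subset U x
    have hCopen : IsOpen C := hU.connectedComponentIn
    have hCpre : IsPreconnected C := isPreconnected_connectedComponentIn
    have hCord : C.OrdConnected := hCpre.ordConnected
    have hnotU : ∀ t₀ ∈ frontier C, t₀ ∉ U := by
      intro t₀ ht₀ ht₀U
      have ht₀c := ht₀.1
      have ht₀n : t₀ ∉ C := by
        have h2 := ht₀.2
        rwa [hCopen.interior_eq] at h2
      obtain ⟨ε, hε, hball⟩ := Metric.isOpen_iff.1 hU t₀ ht₀U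
      obtain ⟨y, hy1, hy2⟩ := Metric.mem_closure_iff.1 ht₀c (ε/2) (by linarith)
      have hyball : y ∈ Metric.ball t₀ ε := by
        rw [Metric.mem_ball, dist_comm]
        linarith
      have hpre : IsPreconnected (C ∪ Metric.ball t₀ ε) := by
        apply hCpre.union y hy1 hyball
        rw [Real.ball_eq_Ioo]
        exact isPreconnected_Ioo
      have hsub : C ∪ Metric.ball t₀ ε ⊆ U := union_subset hCsub hball
      have hxin : x ∈ C ∪ Metric.ball t₀ ε := Or.inl (mem_connectedComponentIn hx)
      have hCC := hpre.subset_connectedComponentIn hxin hsub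
      exact ht₀n (hCC (Or.inr (Metric.mem_ball_self hε)))
    apply comp_zero hCopen hCord (mem_connectedComponentIn hx) (hg.mono_set (hCsub.trans inter_subset_left))
      (hf.mono_set (hCsub.trans inter_subset_left))
      (fun c₁ c₂ h1 h2 => hFTC c₁ c₂ h1 (h2.trans (hCsub.trans inter_subset_left)))
    intro t₀ ht₀
    have ht₀U : t₀ ∉ U := hnotU t₀ ht₀
    have ht₀cl : t₀ ∈ closure U := closure_mono hCsub ht₀.1
    by_cases ht₀A : t₀ ∈ A
    · have ht₀B : t₀ ∉ B := fun h => ht₀U ⟨ht₀A, h⟩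
      have : t₀ ∈ frontier B := by
        rw [hB.frontier_eq]
        exact ⟨closure_mono inter_subset_right ht₀cl, ht₀B⟩
      exact (hbdB t₀ this ht₀A).mono_left (nhdsWithin_mono _ hCsub)
    · have : t₀ ∈ frontier A := by
        rw [hA.frontier_eq]
        exact ⟨closure_mono inter_subset_left ht₀cl, ht₀A⟩
      exact (hbdA t₀ this).mono_left (nhdsWithin_mono _ (hCsub.trans inter_subset_left))
  -- decompose U into components
  set 𝒞 : Set (Set ℝ) := (connectedComponentIn U) '' U with h𝒞
  have hdisj : 𝒞.PairwiseDisjoint id := by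
    rintro _ ⟨x, hx, rfl⟩ _ ⟨y, hy, rfl⟩ hne
    refine Set.disjoint_left.2 (fun z hz1 hz2 => hne ?_)
    simp only [id] at hz1 hz2
    rw [connectedComponentIn_eq hz1, connectedComponentIn_eq hz2]
  have hopen : ∀ c ∈ 𝒞, IsOpen c := by
    rintro _ ⟨x, hx, rfl⟩
    exact hU.connectedComponentIn
  have hne : ∀ c ∈ 𝒞, c.Nonempty := by
    rintro _ ⟨x, hx, rfl⟩
    exact ⟨x, mem_connectedComponentIn hx⟩
  have hcount : 𝒞.Countable := hdisj.countable_of_isOpen hopen hne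
  have hUeq : U = ⋃₀ 𝒞 := by
    apply Subset.antisymm
    · intro x hx
      exact ⟨connectedComponentIn U x, ⟨x, hx, rfl⟩, mem_connectedComponentIn hx⟩
    · exact sUnion_subset (fun c ⟨x, hx, he⟩ => he ▸ connectedComponentIn_subset U x)
  have : ∫ t in U, g t = ∑' c : 𝒞, ∫ t in (c : Set ℝ), g t := by
    haveI := hcount.to_subtype
    have hgU : IntegrableOn g (⋃ c : ↥𝒞, (c : Set ℝ)) := by
      rw [← sUnion_eq_iUnion, ← hUeq]
      exact hg.mono_set inter_subset_left
    rw [hUeq, sUnion_eq_iUnion]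
    exact integral_iUnion (s := fun c : ↥𝒞 => (c : Set ℝ))
      (fun c => (hopen c c.2).measurableSet)
      (fun c₁ c₂ hne12 => hdisj c₁.2 c₂.2 (fun he => hne12 (Subtype.ext he))) hgU
  rw [this]
  have : ∀ c : 𝒞, ∫ t in (c : Set ℝ), g t = 0 := by
    rintro ⟨_, x, hx, rfl⟩
    exact hcomp0 x hx
  simp_rw [this, tsum_zero]
section
variable {d : ℕ} {i : Fin d}

instance uniqueNotNe (d : ℕ) (i : Fin d) : Unique {j : Fin d // ¬ j ≠ i} where
  default := ⟨i, by simp⟩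
  uniq := fun a => Subtype.ext (by simpa [not_not] using a.2)

noncomputable def myE (d : ℕ) (i : Fin d) :
    ((Fin d) → ℝ) ≃ᵐ ({j : Fin d // j ≠ i} → ℝ) × ℝ :=
  (MeasurableEquiv.piEquivPiSubtypeProd (π := fun _ : Fin d => ℝ) (fun j => j ≠ i)).trans
    ((MeasurableEquiv.refl _).prodCongr
      (MeasurableEquiv.funUnique {j : Fin d // ¬ j ≠ i} ℝ))

lemma myE_symm_apply_ne (y : {j : Fin d // j ≠ i} → ℝ) (t : ℝ) (j : Fin d) (hj : j ≠ i) :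
    (myE d i).symm (y, t) j = y ⟨j, hj⟩ := by
  show (Equiv.piEquivPiSubtypeProd (fun j : Fin d => j ≠ i) (fun _ => ℝ)).symm
    (y, fun _ => t) j = y ⟨j, hj⟩
  simp [Equiv.piEquivPiSubtypeProd, hj]

lemma myE_symm_apply_eq (y : {j : Fin d // j ≠ i} → ℝ) (t : ℝ) :
    (myE d i).symm (y, t) i = t := by
  show (Equiv.piEquivPiSubtypeProd (fun j : Fin d => j ≠ i) (fun _ => ℝ)).symm
    (y, fun _ => t) i = t
  simp [Equiv.piEquivPiSubtypeProd]

lemma myE_fst (u : Fin d → ℝ) (j : Fin d) (hj : j ≠ i) :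
    ((myE d i) u).1 ⟨j, hj⟩ = u j := rfl

lemma myE_mp (d : ℕ) (i : Fin d) : MeasurePreserving (myE d i) volume volume := by
  have h1 := volume_preserving_piEquivPiSubtypeProd (fun _ : Fin d => ℝ) (fun j => j ≠ i)
  have h2 := (MeasurePreserving.id (volume : Measure ({j : Fin d // j ≠ i} → ℝ))).prod
    (volume_preserving_funUnique {j : Fin d // ¬ j ≠ i} ℝ)
  have h1' : MeasurePreserving
      (⇑(MeasurableEquiv.piEquivPiSubtypeProd (π := fun _ : Fin d => ℝ) (fun j => j ≠ i)))
      volume (volume.prod volume) := h1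
  have h2' : MeasurePreserving
      (Prod.map (id : ({j : Fin d // j ≠ i} → ℝ) → _)
        (⇑(MeasurableEquiv.funUnique {j : Fin d // ¬ j ≠ i} ℝ)))
      (volume.prod volume) volume := by
    rw [Subsingleton.elim (Unique.fintype : Fintype {j : Fin d // ¬ j ≠ i})
      (Subtype.fintype _)] at h2
    exact h2
  exact h2'.comp h1'
end


section
variable {d : ℕ} {i : Fin d}

lemma update_indep (i : Fin d) (u v : Fin d → ℝ) (h : ∀ j, j ≠ i → u j = v j) :
    Function.update u i = Function.update v i := by
  funext t j
  by_cases hj : j = i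
  · subst hj; simp
  · simp [Function.update_of_ne hj, h j hj]

lemma myE_symm_update (y : {j : Fin d // j ≠ i} → ℝ) (t : ℝ) :
    (myE d i).symm (y, t) = Function.update ((myE d i).symm (y, 0)) i t := by
  funext j
  by_cases hj : j = i
  · subst hj
    rw [myE_symm_apply_eq, Function.update_self]
  · rw [myE_symm_apply_ne y t j hj, Function.update_of_ne hj, myE_symm_apply_ne y 0 j hj]

lemma ae_slice (Q : (Fin d → ℝ) → Prop)
    (hinv : ∀ u v : Fin d → ℝ, Function.update v i = Function.update u i → Q u → Q v)
    (h : ∀ᵐ u ∂(volume : Measure (Fin d → ℝ)), Q u) :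
    ∀ᵐ y ∂(volume : Measure ({j : Fin d // j ≠ i} → ℝ)), Q ((myE d i).symm (y, 0)) := by
  have hmps : MeasurePreserving (⇑(myE d i).symm)
      ((volume : Measure ({j : Fin d // j ≠ i} → ℝ)).prod (volume : Measure ℝ)) volume :=
    (myE_mp d i).symm _
  have h1 : ∀ᵐ z ∂((volume : Measure ({j : Fin d // j ≠ i} → ℝ)).prod (volume : Measure ℝ)),
      Q ((myE d i).symm z) :=
    (hmps.quasiMeasurePreserving.tendsto_ae).eventually h
  have h2 : ∀ᵐ z ∂((volume : Measure ({j : Fin d // j ≠ i} → ℝ)).prod (volume : Measure ℝ)),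
      Q ((myE d i).symm (z.1, 0)) := by
    refine h1.mono (fun z hz => ?_)
    refine hinv _ _ ?_ hz
    apply update_indep
    intro j hj
    rw [myE_symm_apply_ne z.1 0 j hj, show z = (z.1, z.2) from rfl, myE_symm_apply_ne z.1 z.2 j hj]
  have h3 := Measure.ae_ae_of_ae_prod h2
  filter_upwards [h3] with y hy
  by_contra hQ
  have hfalse : ∀ᵐ t ∂(volume : Measure ℝ), False := hy.mono (fun t ht => hQ ht)
  rw [eventually_false_iff_eq_bot] at hfalse
  have h0 : (volume : Measure ℝ) = 0 := ae_eq_bot.1 hfalse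
  have hvol := Real.volume_Ioo (a := 0) (b := 1)
  rw [h0] at hvol
  simp at hvol

end
/-- multivariate Stokes-type lemma: let `D ⊆ ℝ^d` be open,
`φ : D → ℝ` nice along the `i`-th coordinate (a.e. slices absolutely continuous with
partial derivative `∂ᵢφ = φi`), with `φ` and `∂ᵢφ` integrable on `D`, `φ(u) → 0` as `u`
approaches any boundary point of `D` along the `i`-th canonical direction, and `S` open
such that for a.e. slices `φ` tends to `0` at boundary points of `S` interior to the
slice of `D`. Then `∫_{D ∩ S} ∂ᵢφ dm = 0`. -/
theorem stmt_14 (d : ℕ) (hd : 2 ≤ d)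
    (D S : Set (Fin d → ℝ)) (hD : IsOpen D) (hS : IsOpen S)
    (φ φi : (Fin d → ℝ) → ℝ) (i : Fin d)
    (hφ_meas : Measurable φ) (hφi_meas : Measurable φi)
    -- niceness along coordinate i: a.e. slices are absolutely continuous on the open
    -- slice of D, with a.e. derivative the slice of φi
    (hslice : ∀ᵐ u ∂(volume : Measure (Fin d → ℝ)), ∀ c₁ c₂ : ℝ, c₁ ≤ c₂ →
      (∀ t ∈ Set.Icc c₁ c₂, Function.update u i t ∈ D) →
      IntervalIntegrable (fun t => φi (Function.update u i t)) volume c₁ c₂ ∧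
      φ (Function.update u i c₂) - φ (Function.update u i c₁)
        = ∫ t in c₁..c₂, φi (Function.update u i t))
    -- integrability on D
    (hint1 : IntegrableOn φ D volume) (hint2 : IntegrableOn φi D volume)
    -- boundary condition on D along the i-th canonical direction
    (hbdD : ∀ u : Fin d → ℝ, ∀ t₀ : ℝ, Function.update u i t₀ ∈ frontier D →
      Tendsto (fun t => φ (Function.update u i t))
        (𝓝[{t | Function.update u i t ∈ D}] t₀) (𝓝 0))
    -- boundary condition on S, at slice-boundary points interior to D
    (hbdS : ∀ᵐ u ∂(volume : Measure (Fin d → ℝ)), ∀ t₀ : ℝ,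
      Function.update u i t₀ ∈ frontier S → Function.update u i t₀ ∈ D →
      Tendsto (fun t => φ (Function.update u i t))
        (𝓝[{t | Function.update u i t ∈ D ∩ S}] t₀) (𝓝 0)) :
    ∫ u in D ∩ S, φi u = 0 := by

  classical
  have hmps : MeasurePreserving (⇑(myE d i).symm)
      ((volume : Measure ({j : Fin d // j ≠ i} → ℝ)).prod (volume : Measure ℝ)) volume :=
    (myE_mp d i).symm _
  have hDSmeas : MeasurableSet (D ∩ S) := (hD.inter hS).measurableSet
  have hDmeas : MeasurableSet D := hD.measurableSet
  have hGint : Integrable ((D ∩ S).indicator φi) volume :=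
    (integrable_indicator_iff hDSmeas).2 (hint2.mono_set inter_subset_left)
  have hGint' : Integrable (fun z => (D ∩ S).indicator φi ((myE d i).symm z))
      ((volume : Measure ({j : Fin d // j ≠ i} → ℝ)).prod (volume : Measure ℝ)) :=
    (hmps.integrable_comp_emb (MeasurableEquiv.measurableEmbedding _)).2 hGint
  have step1 : ∫ u in D ∩ S, φi u
      = ∫ z, (D ∩ S).indicator φi ((myE d i).symm z)
          ∂((volume : Measure ({j : Fin d // j ≠ i} → ℝ)).prod (volume : Measure ℝ)) := by
    rw [← integral_indicator hDSmeas]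
    exact (hmps.integral_comp' _).symm
  rw [step1, MeasureTheory.integral_prod _ hGint']
  have hint1' : Integrable (fun z => D.indicator φ ((myE d i).symm z))
      ((volume : Measure ({j : Fin d // j ≠ i} → ℝ)).prod (volume : Measure ℝ)) :=
    (hmps.integrable_comp_emb (MeasurableEquiv.measurableEmbedding _)).2
      ((integrable_indicator_iff hDmeas).2 hint1)
  have hint2' : Integrable (fun z => D.indicator φi ((myE d i).symm z))
      ((volume : Measure ({j : Fin d // j ≠ i} → ℝ)).prod (volume : Measure ℝ)) :=
    (hmps.integrable_comp_emb (MeasurableEquiv.measurableEmbedding _)).2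
      ((integrable_indicator_iff hDmeas).2 hint2)
  have hae1 := hint1'.prod_right_ae
  have hae2 := hint2'.prod_right_ae
  have htr1 := ae_slice (i := i) (Q := fun u => ∀ c₁ c₂ : ℝ, c₁ ≤ c₂ →
      (∀ t ∈ Set.Icc c₁ c₂, Function.update u i t ∈ D) →
      IntervalIntegrable (fun t => φi (Function.update u i t)) volume c₁ c₂ ∧
      φ (Function.update u i c₂) - φ (Function.update u i c₁)
        = ∫ t in c₁..c₂, φi (Function.update u i t))
    (fun u v hupd h => by simp only [hupd]; exact h) hslice
  have htr2 := ae_slice (i := i) (Q := fun u => ∀ t₀ : ℝ,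
      Function.update u i t₀ ∈ frontier S → Function.update u i t₀ ∈ D →
      Tendsto (fun t => φ (Function.update u i t))
        (𝓝[{t | Function.update u i t ∈ D ∩ S}] t₀) (𝓝 0))
    (fun u v hupd h => by simp only [hupd]; exact h) hbdS
  refine integral_eq_zero_of_ae ?_
  filter_upwards [hae1, hae2, htr1, htr2] with y hy1 hy2 hy3 hy4
  set u : Fin d → ℝ := (myE d i).symm (y, 0) with hu
  have hcont : Continuous (fun t : ℝ => Function.update u i t) :=
    continuous_const.update i continuous_id
  set A : Set ℝ := {t | Function.update u i t ∈ D} with hAdef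
  set B : Set ℝ := {t | Function.update u i t ∈ S} with hBdef
  have hAopen : IsOpen A := hD.preimage hcont
  have hBopen : IsOpen B := hS.preimage hcont
  have heq1 : (fun t => D.indicator φ ((myE d i).symm (y, t)))
      = fun t => A.indicator (fun t' => φ (Function.update u i t')) t := by
    funext t
    rw [myE_symm_update, ← hu]
    by_cases h : Function.update u i t ∈ D
    · rw [Set.indicator_of_mem h, Set.indicator_of_mem (show t ∈ A from h)]
    · rw [Set.indicator_of_notMem h, Set.indicator_of_notMem (show t ∉ A from h)]
  have heq2 : (fun t => D.indicator φi ((myE d i).symm (y, t)))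
      = fun t => A.indicator (fun t' => φi (Function.update u i t')) t := by
    funext t
    rw [myE_symm_update, ← hu]
    by_cases h : Function.update u i t ∈ D
    · rw [Set.indicator_of_mem h, Set.indicator_of_mem (show t ∈ A from h)]
    · rw [Set.indicator_of_notMem h, Set.indicator_of_notMem (show t ∉ A from h)]
  rw [heq1] at hy1
  rw [heq2] at hy2
  have hfA : IntegrableOn (fun t => φ (Function.update u i t)) A volume :=
    (integrable_indicator_iff hAopen.measurableSet).1 hy1
  have hgA : IntegrableOn (fun t => φi (Function.update u i t)) A volume :=
    (integrable_indicator_iff hAopen.measurableSet).1 hy2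
  have hbdA' : ∀ t₀ ∈ frontier A, Tendsto (fun t => φ (Function.update u i t)) (𝓝[A] t₀) (𝓝 0) := by
    intro t₀ ht₀
    rw [hAopen.frontier_eq] at ht₀
    obtain ⟨hc, hn⟩ := ht₀
    have hfr : Function.update u i t₀ ∈ frontier D := by
      rw [hD.frontier_eq]
      exact ⟨hcont.closure_preimage_subset D hc, hn⟩
    exact hbdD u t₀ hfr
  have hbdB' : ∀ t₀ : ℝ, t₀ ∈ frontier B → t₀ ∈ A →
      Tendsto (fun t => φ (Function.update u i t)) (𝓝[A ∩ B] t₀) (𝓝 0) := by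
    intro t₀ ht₀ hmemA
    rw [hBopen.frontier_eq] at ht₀
    obtain ⟨hc, hn⟩ := ht₀
    have hfrS : Function.update u i t₀ ∈ frontier S := by
      rw [hS.frontier_eq]
      exact ⟨hcont.closure_preimage_subset S hc, hn⟩
    exact hy4 t₀ hfrS hmemA
  have key := oneD hAopen hBopen hfA hgA (fun c₁ c₂ h1 h2 => hy3 c₁ c₂ h1 h2) hbdA' hbdB'
  have heq3 : (fun t => (D ∩ S).indicator φi ((myE d i).symm (y, t)))
      = fun t => (A ∩ B).indicator (fun t' => φi (Function.update u i t')) t := by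
    funext t
    rw [myE_symm_update, ← hu]
    by_cases h : Function.update u i t ∈ D ∩ S
    · rw [Set.indicator_of_mem h, Set.indicator_of_mem (show t ∈ A ∩ B from ⟨h.1, h.2⟩)]
    · rw [Set.indicator_of_notMem h,
        Set.indicator_of_notMem (show t ∉ A ∩ B from fun ht => h ⟨ht.1, ht.2⟩)]
  show (∫ t, (D ∩ S).indicator φi ((myE d i).symm (y, t)) ∂volume) = 0
  rw [heq3, integral_indicator (hAopen.inter hBopen).measurableSet]
  exact key
end

section
/- Fisher information of product models along canonical directions: if the μ-dominated model (P_θ), θ ∈ Θ ⊆ ℝ^p open, is differentiable in L²(μ) at θ₀ along canonical directions with partial derivatives ξ̇_{θ₀,1}, …, ξ̇_{θ₀,p}, then the n-fold product model (P_θ^{⊗n}) is differentiable in L²(μ^{⊗n}) at θ₀ along canonical directions, with i-th partial derivative (x₁,…,x_n) ↦ Σ_{k=1}^n ξ̇_{θ₀,i}(x_k) Π_{k'≠k} ξ_{θ₀}(x_{k'}), and Fisher information matrix I_{P^{⊗n}}(θ₀) = n · I_P(θ₀). -/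
open MeasureTheory Filter Topology Set Finset
open scoped ENNReal NNReal

/-- telescoping: difference of products over a finset in a linear order. -/
theorem tele {ι : Type*} [LinearOrder ι] [DecidableEq ι] (s : Finset ι) (a b : ι → ℝ) :
    (∏ i ∈ s, a i) - (∏ i ∈ s, b i)
      = ∑ i ∈ s, (a i - b i) *
        ((∏ j ∈ s.filter (· < i), a j) * ∏ j ∈ s.filter (i < ·), b j) := by
  induction s using Finset.induction_on_max with
  | empty => simp
  | insert m s hm ih =>
    have hms : m ∉ s := fun h => absurd (hm m h) (lt_irrefl m)
    rw [Finset.prod_insert hms, Finset.prod_insert hms, Finset.sum_insert hms]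
    have h1 : (insert m s).filter (· < m) = s := by
      rw [Finset.filter_insert, if_neg (lt_irrefl m), Finset.filter_true_of_mem hm]
    have h2 : (insert m s).filter (m < ·) = ∅ := by
      rw [Finset.filter_insert, if_neg (lt_irrefl m), Finset.filter_false_of_mem
        (fun x hx => not_lt_of_gt (hm x hx))]
    have h3 : ∀ i ∈ s, (a i - b i) *
        ((∏ j ∈ (insert m s).filter (· < i), a j) * ∏ j ∈ (insert m s).filter (i < ·), b j)
        = b m * ((a i - b i) * ((∏ j ∈ s.filter (· < i), a j) * ∏ j ∈ s.filter (i < ·), b j)) := by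
      intro i hi
      have h4 : (insert m s).filter (· < i) = s.filter (· < i) := by
        rw [Finset.filter_insert, if_neg (not_lt_of_gt (hm i hi))]
      have h5 : (insert m s).filter (i < ·) = insert m (s.filter (i < ·)) := by
        rw [Finset.filter_insert, if_pos (hm i hi)]
      have hm' : m ∉ s.filter (i < ·) := fun h => hms (Finset.mem_of_mem_filter m h)
      rw [h4, h5, Finset.prod_insert hm']
      ring
    rw [Finset.sum_congr rfl h3, ← Finset.mul_sum, ← ih, h1, h2]
    ring

theorem prod_erase_split {ι : Type*} [LinearOrder ι] [DecidableEq ι] (s : Finset ι) (k : ι)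
    (g : ι → ℝ) :
    ∏ i ∈ s.erase k, g i = (∏ j ∈ s.filter (· < k), g j) * ∏ j ∈ s.filter (k < ·), g j := by
  have he : s.erase k = s.filter (· < k) ∪ s.filter (k < ·) := by
    ext a
    simp only [Finset.mem_erase, Finset.mem_union, Finset.mem_filter]
    constructor
    · rintro ⟨hne, ha⟩; rcases lt_or_gt_of_ne hne with h | h
      · exact Or.inl ⟨ha, h⟩
      · exact Or.inr ⟨ha, h⟩
    · rintro (⟨ha, h⟩ | ⟨ha, h⟩)
      · exact ⟨ne_of_lt h, ha⟩
      · exact ⟨ne_of_gt h, ha⟩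
  have hd : Disjoint (s.filter (· < k)) (s.filter (k < ·)) := by
    refine Finset.disjoint_left.mpr ?_
    intro a ha hb
    exact absurd (Finset.mem_filter.mp hb).2 (not_lt_of_gt (Finset.mem_filter.mp ha).2)
  rw [he, Finset.prod_union hd]

theorem prod_split_at {ι : Type*} [LinearOrder ι] [DecidableEq ι] (s : Finset ι) {k : ι}
    (hk : k ∈ s) (g : ι → ℝ) :
    ∏ i ∈ s, g i = g k * ((∏ j ∈ s.filter (· < k), g j) * ∏ j ∈ s.filter (k < ·), g j) := by
  rw [← Finset.mul_prod_erase s g hk, prod_erase_split]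

section Q
variable {Y : Type*} [MeasurableSpace Y] {ν : Measure Y}

/-- `∫ h² = ‖h‖²` for `h ∈ L²`. -/
theorem integral_sq_eq (h : Y → ℝ) (hh : MemLp h 2 ν) :
    ∫ x, h x ^ 2 ∂ν = ‖hh.toLp h‖ ^ 2 := by
  rw [← real_inner_self_eq_norm_sq, L2.inner_def]
  refine integral_congr_ae ?_
  filter_upwards [hh.coeFn_toLp] with x hx
  simp [hx, sq]

theorem cauchy_schwarz_int (h g : Y → ℝ) (hh : MemLp h 2 ν) (hg : MemLp g 2 ν) :
    |∫ x, h x * g x ∂ν| ≤ Real.sqrt (∫ x, h x ^ 2 ∂ν) * Real.sqrt (∫ x, g x ^ 2 ∂ν) := by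
  have h1 : ∫ x, h x * g x ∂ν = @inner ℝ _ _ (hh.toLp h) (hg.toLp g) := by
    rw [L2.inner_def]
    refine integral_congr_ae ?_
    filter_upwards [hh.coeFn_toLp, hg.coeFn_toLp] with x hx hy
    simp [hx, hy, mul_comm]
  rw [h1, integral_sq_eq h hh, integral_sq_eq g hg,
    Real.sqrt_sq (norm_nonneg _), Real.sqrt_sq (norm_nonneg _)]
  exact abs_real_inner_le_norm _ _

theorem sqrt_integral_sq_add_le (h g : Y → ℝ) (hh : MemLp h 2 ν) (hg : MemLp g 2 ν) :
    Real.sqrt (∫ x, (h x + g x) ^ 2 ∂ν)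
      ≤ Real.sqrt (∫ x, h x ^ 2 ∂ν) + Real.sqrt (∫ x, g x ^ 2 ∂ν) := by
  have hsum : MemLp (fun x => h x + g x) 2 ν := hh.add hg
  rw [integral_sq_eq _ hsum, integral_sq_eq _ hh, integral_sq_eq _ hg,
    Real.sqrt_sq (norm_nonneg _), Real.sqrt_sq (norm_nonneg _), Real.sqrt_sq (norm_nonneg _)]
  rw [show hsum.toLp _ = hh.toLp h + hg.toLp g from MemLp.toLp_add hh hg]
  exact norm_add_le _ _

theorem sqrt_integral_sq_sum_le {ι : Type*} (s : Finset ι) (h : ι → Y → ℝ)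
    (hh : ∀ i ∈ s, MemLp (h i) 2 ν) :
    Real.sqrt (∫ x, (∑ i ∈ s, h i x) ^ 2 ∂ν)
      ≤ ∑ i ∈ s, Real.sqrt (∫ x, h i x ^ 2 ∂ν) := by
  classical
  induction s using Finset.induction_on with
  | empty => simp
  | @insert m s' hms ih =>
    have hsum : MemLp (fun x => ∑ i ∈ s', h i x) 2 ν := by
      have := memLp_finset_sum' s' (fun i hi => hh i (Finset.mem_insert_of_mem hi))
      rw [show (fun x => ∑ i ∈ s', h i x) = ∑ i ∈ s', h i from funext fun x => by simp]
      exact this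
    calc Real.sqrt (∫ x, (∑ i ∈ insert m s', h i x) ^ 2 ∂ν)
        = Real.sqrt (∫ x, (h m x + ∑ i ∈ s', h i x) ^ 2 ∂ν) := by
          simp_rw [Finset.sum_insert hms]
      _ ≤ Real.sqrt (∫ x, h m x ^ 2 ∂ν) + Real.sqrt (∫ x, (∑ i ∈ s', h i x) ^ 2 ∂ν) :=
          sqrt_integral_sq_add_le _ _ (hh m (Finset.mem_insert_self m s')) hsum
      _ ≤ Real.sqrt (∫ x, h m x ^ 2 ∂ν) + ∑ i ∈ s', Real.sqrt (∫ x, h i x ^ 2 ∂ν) := by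
          gcongr
          exact ih (fun i hi => hh i (Finset.mem_insert_of_mem hi))
      _ = ∑ i ∈ insert m s', Real.sqrt (∫ x, h i x ^ 2 ∂ν) := by
          rw [Finset.sum_insert hms]

theorem memLp_finsum {ι : Type*} (s : Finset ι) (h : ι → Y → ℝ)
    (hh : ∀ i ∈ s, MemLp (h i) 2 ν) : MemLp (fun x => ∑ i ∈ s, h i x) 2 ν := by
  have := memLp_finset_sum' s hh
  rw [show (fun x => ∑ i ∈ s, h i x) = ∑ i ∈ s, h i from funext fun x => by simp]
  exact this

end Q

section Tensor
variable {X : Type*} [MeasurableSpace X] (μ : Measure X) [SigmaFinite μ] {n : ℕ}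

theorem qmp_eval (k : Fin n) :
    Measure.QuasiMeasurePreserving (fun x : Fin n → X => x k)
      (Measure.pi fun _ => μ) μ := by
  refine ⟨measurable_pi_apply k, ?_⟩
  refine Measure.AbsolutelyContinuous.mk fun s hs h0 => ?_
  rw [Measure.map_apply (measurable_pi_apply k) hs]
  exact Measure.pi_eval_preimage_null _ h0

theorem tensor_aesm (g : Fin n → X → ℝ) (hg : ∀ k, AEStronglyMeasurable (g k) μ) :
    AEStronglyMeasurable (fun x : Fin n → X => ∏ k, g k (x k)) (Measure.pi fun _ => μ) := by
  exact Finset.aestronglyMeasurable_fun_prod _ fun k _ =>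
    (hg k).comp_quasiMeasurePreserving (qmp_eval μ k)

theorem tensor_integrable (g : Fin n → X → ℝ) (hg : ∀ k, Integrable (g k) μ) :
    Integrable (fun x : Fin n → X => ∏ k, g k (x k)) (Measure.pi fun _ => μ) := by
  letI : MeasureSpace X := ⟨μ⟩
  exact MeasureTheory.Integrable.fin_nat_prod (E := fun _ : Fin n => X) hg

theorem tensor_integral (g : Fin n → X → ℝ) :
    ∫ x : Fin n → X, ∏ k, g k (x k) ∂(Measure.pi fun _ => μ) = ∏ k, ∫ y, g k y ∂μ := by
  letI : MeasureSpace X := ⟨μ⟩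
  exact MeasureTheory.integral_fin_nat_prod_eq_prod (E := fun _ : Fin n => X) g

theorem tensor_sq_integral (g : Fin n → X → ℝ) :
    ∫ x : Fin n → X, (∏ k, g k (x k)) ^ 2 ∂(Measure.pi fun _ => μ)
      = ∏ k, ∫ y, g k y ^ 2 ∂μ := by
  rw [← tensor_integral μ (fun k y => g k y ^ 2)]
  simp_rw [← Finset.prod_pow]

theorem tensor_memLp (g : Fin n → X → ℝ) (hg : ∀ k, MemLp (g k) 2 μ) :
    MemLp (fun x : Fin n → X => ∏ k, g k (x k)) 2 (Measure.pi fun _ => μ) := by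
  refine (memLp_two_iff_integrable_sq (tensor_aesm μ g fun k => (hg k).aestronglyMeasurable)).mpr ?_
  have := tensor_integrable μ (fun k y => g k y ^ 2) (fun k => (hg k).integrable_sq)
  simpa [← Finset.prod_pow] using this

omit [SigmaFinite μ] in
theorem L2.mul_integrable {h g : X → ℝ} (hh : MemLp h 2 μ) (hg : MemLp g 2 μ) :
    Integrable (fun x => h x * g x) μ := by
  have h1 : (1 : ℝ≥0∞) / 1 = 1 / 2 + 1 / 2 := by
    rw [ENNReal.div_add_div_same, one_add_one_eq_two,
      ENNReal.div_self two_ne_zero ENNReal.ofNat_ne_top, div_one]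
  have := hh.smul (E := ℝ) (𝕜 := ℝ) hg (p := 2) (q := 2) (r := 1)
  rw [← memLp_one_iff_integrable]
  have heq : (fun x => h x * g x) = g • h := by
    funext x; simp [mul_comm]
  rw [heq]
  exact this

end Tensor
theorem key_alg {n : ℕ} (a b d : Fin n → ℝ) (s : ℝ) :
    (∏ k, a k) - (∏ k, b k) - s * ∑ k, d k * ∏ k' ∈ Finset.univ.erase k, b k'
    = (∑ k, (a k - b k - s * d k) *
        ((∏ j ∈ Finset.univ.filter (· < k), a j) * ∏ j ∈ Finset.univ.filter (k < ·), b j))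
      + ∑ k, s * (d k *
        ((∏ j ∈ Finset.univ.filter (· < k), a j) * ∏ j ∈ Finset.univ.filter (k < ·), b j
          - ∏ k' ∈ Finset.univ.erase k, b k')) := by
  rw [tele Finset.univ a b, Finset.mul_sum, ← Finset.sum_sub_distrib,
    ← Finset.sum_add_distrib]
  refine Finset.sum_congr rfl fun k _ => ?_
  ring
/-- Fisher information of product models along canonical directions:
if the μ-dominated model `(P_θ)`, `θ ∈ Θ ⊆ ℝ^p` open, is differentiable in `L²(μ)` at
`θ₀` along canonical directions with partial derivatives `D i = ξ̇_{θ₀,i}`, then the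
`n`-fold product model is differentiable in `L²(μ^⊗n)` at `θ₀` along canonical
directions, with `i`-th partial derivative `x ↦ Σ_k ξ̇_{θ₀,i}(x_k) Π_{k'≠k} ξ_{θ₀}(x_{k'})`,
and Fisher information matrix `I_{P^⊗n}(θ₀) = n · I_P(θ₀)`. -/
theorem stmt_17 {X : Type*} [MeasurableSpace X] (μ : Measure X) [SigmaFinite μ]
    (p n : ℕ) (hn : 1 ≤ n)
    (Θ : Set (Fin p → ℝ)) (hΘ : IsOpen Θ) (θ₀ : Fin p → ℝ) (hθ₀ : θ₀ ∈ Θ)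
    (f : (Fin p → ℝ) → X → ℝ)
    (hf_meas : Measurable (Function.uncurry f))
    (hf_nonneg : ∀ θ x, 0 ≤ f θ x)
    (hf_prob : ∀ θ ∈ Θ, ∫ x, f θ x ∂μ = 1)
    (D : Fin p → X → ℝ) (hD : ∀ i, MemLp (D i) 2 μ)
    (hdiff : ∀ i : Fin p, Tendsto
      (fun t => (∫ x, (Real.sqrt (f (Function.update θ₀ i t) x) - Real.sqrt (f θ₀ x)
          - (t - θ₀ i) * D i x) ^ 2 ∂μ) / (t - θ₀ i) ^ 2)
      (𝓝[≠] (θ₀ i)) (𝓝 0)) :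
    (∀ i : Fin p, Tendsto
      (fun t => (∫ x : Fin n → X,
          ((∏ k, Real.sqrt (f (Function.update θ₀ i t) (x k)))
            - (∏ k, Real.sqrt (f θ₀ (x k)))
            - (t - θ₀ i) * ∑ k, D i (x k)
                * ∏ k' ∈ Finset.univ.erase k, Real.sqrt (f θ₀ (x k'))) ^ 2
          ∂(Measure.pi fun _ : Fin n => μ)) / (t - θ₀ i) ^ 2)
      (𝓝[≠] (θ₀ i)) (𝓝 0))
    ∧ ∀ i j : Fin p,
      4 * (∫ x : Fin n → X,
          (∑ k, D i (x k) * ∏ k' ∈ Finset.univ.erase k, Real.sqrt (f θ₀ (x k')))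
          * (∑ k, D j (x k) * ∏ k' ∈ Finset.univ.erase k, Real.sqrt (f θ₀ (x k')))
          ∂(Measure.pi fun _ : Fin n => μ))
        = n * (4 * ∫ y, D i y * D j y ∂μ) := by
  classical
  -- basic facts about the model
  have hfm : ∀ θ, Measurable (f θ) := fun θ => hf_meas.of_uncurry_left
  have hξm : ∀ θ, Measurable (fun x => Real.sqrt (f θ x)) :=
    fun θ => (hfm θ).sqrt
  have hint : ∀ θ ∈ Θ, Integrable (f θ) μ := by
    intro θ hθ
    by_contra h
    have := hf_prob θ hθ
    rw [integral_undef h] at this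
    norm_num at this
  have hsq1 : ∀ θ ∈ Θ, ∫ x, (Real.sqrt (f θ x)) ^ 2 ∂μ = 1 := by
    intro θ hθ
    rw [← hf_prob θ hθ]
    exact integral_congr_ae (Eventually.of_forall fun x => Real.sq_sqrt (hf_nonneg θ x))
  have hmem : ∀ θ ∈ Θ, MemLp (fun x => Real.sqrt (f θ x)) 2 μ := by
    intro θ hθ
    refine (memLp_two_iff_integrable_sq (hξm θ).aestronglyMeasurable).mpr ?_
    exact (hint θ hθ).congr (Eventually.of_forall fun x => (Real.sq_sqrt (hf_nonneg θ x)).symm)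
  -- openness gives: updates near θ₀ stay in Θ
  have hupd : ∀ i : Fin p, ∀ᶠ t in 𝓝 (θ₀ i), Function.update θ₀ i t ∈ Θ := by
    intro i
    have hc : Continuous fun t : ℝ => Function.update θ₀ i t :=
      continuous_const.update i continuous_id
    have h2 : Tendsto (fun t => Function.update θ₀ i t) (𝓝 (θ₀ i)) (𝓝 θ₀) := by
      have := hc.tendsto (θ₀ i)
      rwa [Function.update_eq_self] at this
    exact h2.eventually (hΘ.eventually_mem hθ₀)
  -- the partial derivatives are orthogonal to ξ₀
  have hDxi : ∀ i : Fin p, ∫ y, D i y * Real.sqrt (f θ₀ y) ∂μ = 0 := by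
    intro i
    set c := ∫ y, D i y * Real.sqrt (f θ₀ y) ∂μ with hcdef
    set ε := fun t => ∫ x, (Real.sqrt (f (Function.update θ₀ i t) x) - Real.sqrt (f θ₀ x)
        - (t - θ₀ i) * D i x) ^ 2 ∂μ with hεdef
    have hεnn : ∀ t, 0 ≤ ε t := fun t => integral_nonneg fun x => sq_nonneg _
    have hbound : ∀ᶠ t in 𝓝[≠] (θ₀ i), (t - θ₀ i) * c ≤ Real.sqrt (ε t) := by
      filter_upwards [eventually_nhdsWithin_of_eventually_nhds (hupd i)] with t ht
      have hmemt := hmem _ ht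
      have hmw : MemLp (fun x => Real.sqrt (f (Function.update θ₀ i t) x) - Real.sqrt (f θ₀ x)
          - (t - θ₀ i) * D i x) 2 μ :=
        (hmemt.sub (hmem _ hθ₀)).sub ((hD i).const_mul (t - θ₀ i))
      have hkey1 : |∫ x, Real.sqrt (f (Function.update θ₀ i t) x) * Real.sqrt (f θ₀ x) ∂μ| ≤ 1 := by
        have := cauchy_schwarz_int _ _ hmemt (hmem _ hθ₀)
        rwa [hsq1 _ ht, hsq1 _ hθ₀, Real.sqrt_one, mul_one] at this
      have hwle : |∫ x, (Real.sqrt (f (Function.update θ₀ i t) x) - Real.sqrt (f θ₀ x)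
          - (t - θ₀ i) * D i x) * Real.sqrt (f θ₀ x) ∂μ| ≤ Real.sqrt (ε t) := by
        have := cauchy_schwarz_int _ _ hmw (hmem _ hθ₀)
        rwa [hsq1 _ hθ₀, Real.sqrt_one, mul_one] at this
      have hkey2 : ∫ x, Real.sqrt (f (Function.update θ₀ i t) x) * Real.sqrt (f θ₀ x) ∂μ
          = (∫ x, (Real.sqrt (f (Function.update θ₀ i t) x) - Real.sqrt (f θ₀ x)
              - (t - θ₀ i) * D i x) * Real.sqrt (f θ₀ x) ∂μ) + 1 + (t - θ₀ i) * c := by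
        have hpt : ∀ x, Real.sqrt (f (Function.update θ₀ i t) x) * Real.sqrt (f θ₀ x)
            = (Real.sqrt (f (Function.update θ₀ i t) x) - Real.sqrt (f θ₀ x)
              - (t - θ₀ i) * D i x) * Real.sqrt (f θ₀ x)
              + ((Real.sqrt (f θ₀ x)) ^ 2 + (t - θ₀ i) * (D i x * Real.sqrt (f θ₀ x))) := by
          intro x; ring
        have hB : Integrable (fun x => (Real.sqrt (f θ₀ x)) ^ 2) μ := (hmem _ hθ₀).integrable_sq
        have hC : Integrable (fun x => (t - θ₀ i) * (D i x * Real.sqrt (f θ₀ x))) μ :=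
          (L2.mul_integrable μ (hD i) (hmem _ hθ₀)).const_mul (t - θ₀ i)
        have hBC : Integrable (fun x => (Real.sqrt (f θ₀ x)) ^ 2
            + (t - θ₀ i) * (D i x * Real.sqrt (f θ₀ x))) μ := hB.add hC
        rw [integral_congr_ae (Eventually.of_forall hpt),
          integral_add (L2.mul_integrable μ hmw (hmem _ hθ₀)) hBC,
          integral_add hB hC, integral_const_mul, hsq1 _ hθ₀, ← hcdef]
        ring
      -- combine
      have := hkey1
      rw [hkey2] at this
      have h3 := (abs_le.mp this).2
      have h4 := (abs_le.mp hwle).1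
      linarith
    have htend : Tendsto (fun t => Real.sqrt (ε t / (t - θ₀ i) ^ 2)) (𝓝[≠] (θ₀ i)) (𝓝 0) := by
      have := (hdiff i).sqrt
      rwa [Real.sqrt_zero] at this
    have hIoi : 𝓝[Set.Ioi (θ₀ i)] (θ₀ i) ≤ 𝓝[≠] (θ₀ i) :=
      nhdsWithin_mono _ (fun x hx => ne_of_gt hx)
    have hIio : 𝓝[Set.Iio (θ₀ i)] (θ₀ i) ≤ 𝓝[≠] (θ₀ i) :=
      nhdsWithin_mono _ (fun x hx => ne_of_lt hx)
    have h1 : c ≤ 0 := by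
      refine ge_of_tendsto (htend.mono_left hIoi) ?_
      filter_upwards [hbound.filter_mono hIoi, self_mem_nhdsWithin] with t hb ht
      have hs : 0 < t - θ₀ i := sub_pos.mpr ht
      rw [Real.sqrt_div (hεnn t), Real.sqrt_sq hs.le, le_div_iff₀ hs, mul_comm]
      exact hb
    have h2 : 0 ≤ c := by
      have : -c ≤ 0 := by
        refine ge_of_tendsto (htend.mono_left hIio) ?_
        filter_upwards [hbound.filter_mono hIio, self_mem_nhdsWithin] with t hb ht
        have hs : t - θ₀ i < 0 := sub_neg.mpr ht
        rw [Real.sqrt_div (hεnn t), Real.sqrt_sq_eq_abs, abs_of_neg hs, le_div_iff₀ (by linarith)]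
        calc -c * -(t - θ₀ i) = (t - θ₀ i) * c := by ring
          _ ≤ Real.sqrt (ε t) := hb
      linarith
    linarith
  
  have hxixi : ∫ y, Real.sqrt (f θ₀ y) * Real.sqrt (f θ₀ y) ∂μ = 1 := by
    rw [← hsq1 _ hθ₀]
    exact integral_congr_ae (Eventually.of_forall fun y => (pow_two (Real.sqrt (f θ₀ y))).symm)
  refine ⟨?_, ?_⟩
  · -- Part 1 : L² differentiability of the product model
    intro i
    set Cc := ∫ y, D i y ^ 2 ∂μ with hCcdef
    have hCc0 : 0 ≤ Cc := integral_nonneg fun y => sq_nonneg _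
    set ε : ℝ → ℝ := fun t => ∫ x, (Real.sqrt (f (Function.update θ₀ i t) x) - Real.sqrt (f θ₀ x)
        - (t - θ₀ i) * D i x) ^ 2 ∂μ with hεdef
    set δ : ℝ → ℝ := fun t => ∫ x, (Real.sqrt (f (Function.update θ₀ i t) x)
        - Real.sqrt (f θ₀ x)) ^ 2 ∂μ with hδdef
    have hεnn : ∀ t, 0 ≤ ε t := fun t => integral_nonneg fun x => sq_nonneg _
    have hδnn : ∀ t, 0 ≤ δ t := fun t => integral_nonneg fun x => sq_nonneg _
    have hεdiv : Tendsto (fun t => ε t / (t - θ₀ i) ^ 2) (𝓝[≠] (θ₀ i)) (𝓝 0) := by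
      simpa only [hεdef] using hdiff i
    have t2 : Tendsto (fun t => Real.sqrt (ε t / (t - θ₀ i) ^ 2)) (𝓝[≠] (θ₀ i)) (𝓝 0) := by
      have := hεdiv.sqrt
      rwa [Real.sqrt_zero] at this
    have t3 : Tendsto (fun t => |t - θ₀ i|) (𝓝[≠] (θ₀ i)) (𝓝 0) := by
      have h1 : Tendsto (fun t : ℝ => t - θ₀ i) (𝓝 (θ₀ i)) (𝓝 0) := by
        simpa using (continuous_sub_right (θ₀ i)).tendsto (θ₀ i)
      simpa using (h1.abs.mono_left nhdsWithin_le_nhds)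
    have t4 : Tendsto (fun t => Real.sqrt (ε t)) (𝓝[≠] (θ₀ i)) (𝓝 0) := by
      have hev : (fun t => Real.sqrt (ε t / (t - θ₀ i) ^ 2) * |t - θ₀ i|)
          =ᶠ[𝓝[≠] (θ₀ i)] (fun t => Real.sqrt (ε t)) := by
        filter_upwards [self_mem_nhdsWithin] with t ht
        have hs : t - θ₀ i ≠ 0 := sub_ne_zero.mpr ht
        rw [Real.sqrt_div (hεnn t), Real.sqrt_sq_eq_abs, div_mul_cancel₀]
        exact abs_ne_zero.mpr hs
      exact Tendsto.congr' hev (by simpa using t2.mul t3)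
    have t5 : Tendsto (fun t => Real.sqrt (δ t)) (𝓝[≠] (θ₀ i)) (𝓝 0) := by
      have hb : ∀ᶠ t in 𝓝[≠] (θ₀ i),
          Real.sqrt (δ t) ≤ Real.sqrt (ε t) + |t - θ₀ i| * Real.sqrt Cc := by
        filter_upwards [eventually_nhdsWithin_of_eventually_nhds (hupd i)] with t ht
        have hmw : MemLp (fun x => Real.sqrt (f (Function.update θ₀ i t) x) - Real.sqrt (f θ₀ x)
            - (t - θ₀ i) * D i x) 2 μ :=
          ((hmem _ ht).sub (hmem _ hθ₀)).sub ((hD i).const_mul _)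
        have hsD : MemLp (fun x => (t - θ₀ i) * D i x) 2 μ := (hD i).const_mul _
        have h1 := sqrt_integral_sq_add_le _ _ hmw hsD
        have h2 : (∫ x, ((Real.sqrt (f (Function.update θ₀ i t) x) - Real.sqrt (f θ₀ x)
            - (t - θ₀ i) * D i x) + (t - θ₀ i) * D i x) ^ 2 ∂μ) = δ t := by
          rw [hδdef]
          exact integral_congr_ae (Eventually.of_forall fun x => by ring_nf)
        have h3 : (∫ x, ((t - θ₀ i) * D i x) ^ 2 ∂μ) = (t - θ₀ i) ^ 2 * Cc := by
          rw [hCcdef, ← integral_const_mul]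
          exact integral_congr_ae (Eventually.of_forall fun x => by ring)
        rw [h2, h3] at h1
        calc Real.sqrt (δ t) ≤ Real.sqrt (ε t) + Real.sqrt ((t - θ₀ i) ^ 2 * Cc) := by
              rw [hεdef]; exact h1
          _ = Real.sqrt (ε t) + |t - θ₀ i| * Real.sqrt Cc := by
              rw [Real.sqrt_mul (sq_nonneg _), Real.sqrt_sq_eq_abs]
      refine squeeze_zero' (Eventually.of_forall fun t => Real.sqrt_nonneg _) hb ?_
      simpa using t4.add (t3.mul (tendsto_const_nhds (x := Real.sqrt Cc)))
    have t6 : Tendsto (fun t => ((n : ℝ) * Real.sqrt (ε t / (t - θ₀ i) ^ 2)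
        + (n : ℝ) ^ 2 * (Real.sqrt Cc * Real.sqrt (δ t))) ^ 2) (𝓝[≠] (θ₀ i)) (𝓝 0) := by
      have h1 : Tendsto (fun t => (n : ℝ) * Real.sqrt (ε t / (t - θ₀ i) ^ 2)
          + (n : ℝ) ^ 2 * (Real.sqrt Cc * Real.sqrt (δ t))) (𝓝[≠] (θ₀ i))
          (𝓝 ((n : ℝ) * 0 + (n : ℝ) ^ 2 * (Real.sqrt Cc * 0))) :=
        (t2.const_mul _).add ((t5.const_mul _).const_mul _)
      have h2 := h1.pow 2
      simpa using h2
    have hmain : ∀ᶠ t in 𝓝[≠] (θ₀ i),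
        (∫ x : Fin n → X, ((∏ k, Real.sqrt (f (Function.update θ₀ i t) (x k)))
            - (∏ k, Real.sqrt (f θ₀ (x k)))
            - (t - θ₀ i) * ∑ k, D i (x k)
                * ∏ k' ∈ Finset.univ.erase k, Real.sqrt (f θ₀ (x k'))) ^ 2
          ∂(Measure.pi fun _ : Fin n => μ)) / (t - θ₀ i) ^ 2
        ≤ ((n : ℝ) * Real.sqrt (ε t / (t - θ₀ i) ^ 2)
            + (n : ℝ) ^ 2 * (Real.sqrt Cc * Real.sqrt (δ t))) ^ 2 := by
      filter_upwards [eventually_nhdsWithin_of_eventually_nhds (hupd i),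
        self_mem_nhdsWithin] with t ht hne
      have hsne : t - θ₀ i ≠ 0 := sub_ne_zero.mpr hne
      have habs : 0 < |t - θ₀ i| := abs_pos.mpr hsne
      set ξt : X → ℝ := fun y => Real.sqrt (f (Function.update θ₀ i t) y) with hξt
      set ξ0 : X → ℝ := fun y => Real.sqrt (f θ₀ y) with hξ0
      set w : X → ℝ := fun y => ξt y - ξ0 y - (t - θ₀ i) * D i y with hw
      have hmt : MemLp ξt 2 μ := hmem _ ht
      have hm0 : MemLp ξ0 2 μ := hmem _ hθ₀
      have hmw : MemLp w 2 μ := (hmt.sub hm0).sub ((hD i).const_mul _)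
      have hsqt : ∫ y, ξt y ^ 2 ∂μ = 1 := by simp only [hξt]; exact hsq1 _ ht
      have hsq0 : ∫ y, ξ0 y ^ 2 ∂μ = 1 := by simp only [hξ0]; exact hsq1 _ hθ₀
      have hwsq : ∫ y, w y ^ 2 ∂μ = ε t := by simp only [hw, hξt, hξ0, hεdef]
      have hδsq : ∫ y, (ξt y - ξ0 y) ^ 2 ∂μ = δ t := by simp only [hξt, hξ0, hδdef]
      have hDsq : ∫ y, D i y ^ 2 ∂μ = Cc := hCcdef.symm
      set G1 : Fin n → Fin n → X → ℝ :=
        fun k m => if m = k then w else if m < k then ξt else ξ0 with hG1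
      set G2 : Fin n → Fin n → Fin n → X → ℝ := fun k m m' =>
        if m' = k then D i else if m' = m then (fun y => (if m < k then ξt else ξ0) y - ξ0 y)
        else if m' < m then (if m' < k then ξt else ξ0) else ξ0 with hG2
      have hG1mem : ∀ k m, MemLp (G1 k m) 2 μ := by
        intro k m
        simp only [hG1]
        split_ifs
        exacts [hmw, hmt, hm0]
      have hG2mem : ∀ k m m', MemLp (G2 k m m') 2 μ := by
        intro k m m'
        simp only [hG2]
        split_ifs <;>
          first
            | exact hD i
            | exact hmt.sub hm0
            | exact hm0.sub hm0
            | exact hmt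
            | exact hm0
      have hT1mem : ∀ k, MemLp (fun x : Fin n → X => ∏ m, G1 k m (x m)) 2
          (Measure.pi fun _ : Fin n => μ) := fun k => tensor_memLp μ _ (hG1mem k)
      have hUmem : ∀ k m, MemLp (fun x : Fin n → X => (t - θ₀ i) * ∏ m', G2 k m m' (x m')) 2
          (Measure.pi fun _ : Fin n => μ) :=
        fun k m => (tensor_memLp μ _ (hG2mem k m)).const_mul _
      have hT1eval : ∀ (k : Fin n) (x : Fin n → X),
          (∏ m, G1 k m (x m))
          = (ξt (x k) - ξ0 (x k) - (t - θ₀ i) * D i (x k)) *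
            ((∏ j ∈ Finset.univ.filter (· < k), ξt (x j))
              * ∏ j ∈ Finset.univ.filter (k < ·), ξ0 (x j)) := by
        intro k x
        rw [prod_split_at Finset.univ (Finset.mem_univ k) (fun m => G1 k m (x m))]
        congr 1
        · simp only [hG1, if_true, hw]
        congr 1
        · refine Finset.prod_congr rfl fun m hm => ?_
          have h1 : m < k := (Finset.mem_filter.mp hm).2
          simp only [hG1]
          rw [if_neg (ne_of_lt h1), if_pos h1]
        · refine Finset.prod_congr rfl fun m hm => ?_
          have h1 : k < m := (Finset.mem_filter.mp hm).2
          simp only [hG1]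
          rw [if_neg (ne_of_gt h1), if_neg (not_lt_of_gt h1)]
      have hUeval : ∀ (k m : Fin n), m ∈ Finset.univ.erase k → ∀ x : Fin n → X,
          (∏ m', G2 k m m' (x m'))
          = D i (x k) * (((if m < k then ξt else ξ0) (x m) - ξ0 (x m)) *
              ((∏ j ∈ (Finset.univ.erase k).filter (· < m), (if j < k then ξt else ξ0) (x j))
                * ∏ j ∈ (Finset.univ.erase k).filter (m < ·), ξ0 (x j))) := by
        intro k m hm x
        have hmk : m ≠ k := (Finset.mem_erase.mp hm).1
        rw [← Finset.mul_prod_erase Finset.univ (fun m' => G2 k m m' (x m')) (Finset.mem_univ k)]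
        congr 1
        · simp only [hG2, if_true]
        rw [prod_split_at (Finset.univ.erase k) hm (fun m' => G2 k m m' (x m'))]
        congr 1
        · simp only [hG2, if_true]
          rw [if_neg hmk]
        congr 1
        · refine Finset.prod_congr rfl fun j hj => ?_
          have hj1 : j ∈ Finset.univ.erase k := (Finset.mem_filter.mp hj).1
          have hj2 : j < m := (Finset.mem_filter.mp hj).2
          simp only [hG2]
          rw [if_neg (Finset.mem_erase.mp hj1).1, if_neg (ne_of_lt hj2), if_pos hj2]
        · refine Finset.prod_congr rfl fun j hj => ?_
          have hj1 : j ∈ Finset.univ.erase k := (Finset.mem_filter.mp hj).1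
          have hj2 : m < j := (Finset.mem_filter.mp hj).2
          simp only [hG2]
          rw [if_neg (Finset.mem_erase.mp hj1).1, if_neg (ne_of_gt hj2),
            if_neg (not_lt_of_gt hj2)]
      have hProdA : ∀ (k : Fin n) (x : Fin n → X),
          ∏ m' ∈ Finset.univ.erase k, (if m' < k then ξt else ξ0) (x m')
          = (∏ j ∈ Finset.univ.filter (· < k), ξt (x j))
            * ∏ j ∈ Finset.univ.filter (k < ·), ξ0 (x j) := by
        intro k x
        rw [prod_erase_split Finset.univ k (fun m' => (if m' < k then ξt else ξ0) (x m'))]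
        congr 1
        · exact Finset.prod_congr rfl fun j hj => by rw [if_pos (Finset.mem_filter.mp hj).2]
        · exact Finset.prod_congr rfl
            fun j hj => by rw [if_neg (not_lt_of_gt (Finset.mem_filter.mp hj).2)]
      have hpoint : ∀ x : Fin n → X,
          (∏ k, Real.sqrt (f (Function.update θ₀ i t) (x k))) - (∏ k, Real.sqrt (f θ₀ (x k)))
            - (t - θ₀ i) * ∑ k, D i (x k) * ∏ k' ∈ Finset.univ.erase k, Real.sqrt (f θ₀ (x k'))
          = (∑ k, ∏ m, G1 k m (x m))
            + ∑ k, ∑ m ∈ Finset.univ.erase k, (t - θ₀ i) * ∏ m', G2 k m m' (x m') := by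
        intro x
        have h0 : (∏ k, Real.sqrt (f (Function.update θ₀ i t) (x k)))
            - (∏ k, Real.sqrt (f θ₀ (x k)))
            - (t - θ₀ i) * ∑ k, D i (x k) * ∏ k' ∈ Finset.univ.erase k, Real.sqrt (f θ₀ (x k'))
            = (∏ k, ξt (x k)) - (∏ k, ξ0 (x k))
            - (t - θ₀ i) * ∑ k, D i (x k) * ∏ k' ∈ Finset.univ.erase k, ξ0 (x k') := by
          simp only [hξt, hξ0]
        rw [h0, key_alg (fun m => ξt (x m)) (fun m => ξ0 (x m)) (fun m => D i (x m)) (t - θ₀ i)]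
        congr 1
        · exact Finset.sum_congr rfl fun k _ => (hT1eval k x).symm
        · refine Finset.sum_congr rfl fun k _ => ?_
          rw [← hProdA k x, tele (Finset.univ.erase k)
            (fun m' => (if m' < k then ξt else ξ0) (x m')) (fun m' => ξ0 (x m')),
            Finset.mul_sum, Finset.mul_sum]
          exact Finset.sum_congr rfl fun m hm => by rw [hUeval k m hm x]
      have hT1sq : ∀ k, ∫ x : Fin n → X, (∏ m, G1 k m (x m)) ^ 2
          ∂(Measure.pi fun _ : Fin n => μ) = ε t := by
        intro k
        rw [tensor_sq_integral μ (G1 k),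
          ← Finset.mul_prod_erase Finset.univ (fun m => ∫ y, G1 k m y ^ 2 ∂μ)
            (Finset.mem_univ k)]
        have h1 : ∫ y, G1 k k y ^ 2 ∂μ = ε t := by
          have he : G1 k k = w := by simp only [hG1, if_true]
          rw [he, hwsq]
        have h2 : ∀ m ∈ Finset.univ.erase k, (∫ y, G1 k m y ^ 2 ∂μ) = 1 := by
          intro m hm
          have hmk := (Finset.mem_erase.mp hm).1
          rcases lt_or_gt_of_ne hmk with h | h
          · have he : G1 k m = ξt := by simp only [hG1]; rw [if_neg hmk, if_pos h]
            rw [he, hsqt]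
          · have he : G1 k m = ξ0 := by
              simp only [hG1]; rw [if_neg hmk, if_neg (not_lt_of_gt h)]
            rw [he, hsq0]
        rw [h1, Finset.prod_congr rfl h2, Finset.prod_const_one, mul_one]
      have hUsq : ∀ k m, m ∈ Finset.univ.erase k →
          Real.sqrt (∫ x : Fin n → X, ((t - θ₀ i) * ∏ m', G2 k m m' (x m')) ^ 2
            ∂(Measure.pi fun _ : Fin n => μ))
          ≤ |t - θ₀ i| * (Real.sqrt Cc * Real.sqrt (δ t)) := by
        intro k m hm
        have hmk := (Finset.mem_erase.mp hm).1
        have h1 : ∫ x : Fin n → X, ((t - θ₀ i) * ∏ m', G2 k m m' (x m')) ^ 2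
            ∂(Measure.pi fun _ : Fin n => μ)
            = (t - θ₀ i) ^ 2 * ∏ m', ∫ y, G2 k m m' y ^ 2 ∂μ := by
          rw [← tensor_sq_integral μ (G2 k m), ← integral_const_mul]
          exact integral_congr_ae (Eventually.of_forall fun x => by ring)
        have h2 : ∏ m', ∫ y, G2 k m m' y ^ 2 ∂μ ≤ Cc * δ t := by
          rw [← Finset.mul_prod_erase Finset.univ (fun m' => ∫ y, G2 k m m' y ^ 2 ∂μ)
            (Finset.mem_univ k)]
          have hk' : ∫ y, G2 k m k y ^ 2 ∂μ = Cc := by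
            have he : G2 k m k = D i := by simp only [hG2, if_true]
            rw [he, hDsq]
          rw [hk', ← Finset.mul_prod_erase (Finset.univ.erase k)
            (fun m' => ∫ y, G2 k m m' y ^ 2 ∂μ) hm]
          have hrest : ∀ j ∈ (Finset.univ.erase k).erase m,
              (∫ y, G2 k m j y ^ 2 ∂μ) = 1 := by
            intro j hj
            have hjm : j ≠ m := (Finset.mem_erase.mp hj).1
            have hjk : j ≠ k := (Finset.mem_erase.mp (Finset.mem_erase.mp hj).2).1
            rcases lt_or_gt_of_ne hjm with h | h
            · rcases lt_or_ge j k with h' | h'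
              · have he : G2 k m j = ξt := by
                  simp only [hG2]; rw [if_neg hjk, if_neg hjm, if_pos h, if_pos h']
                rw [he, hsqt]
              · have he : G2 k m j = ξ0 := by
                  simp only [hG2]; rw [if_neg hjk, if_neg hjm, if_pos h, if_neg (not_lt_of_ge h')]
                rw [he, hsq0]
            · have he : G2 k m j = ξ0 := by
                simp only [hG2]; rw [if_neg hjk, if_neg hjm, if_neg (not_lt_of_gt h)]
              rw [he, hsq0]
          rw [Finset.prod_congr rfl hrest, Finset.prod_const_one, mul_one]
          have hmid : ∫ y, G2 k m m y ^ 2 ∂μ ≤ δ t := by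
            by_cases h : m < k
            · have he : G2 k m m = fun y => ξt y - ξ0 y := by
                simp only [hG2, if_true]
                rw [if_neg hmk, if_pos h]
              rw [he]
            · have he : G2 k m m = fun y => ξ0 y - ξ0 y := by
                simp only [hG2, if_true]
                rw [if_neg hmk, if_neg h]
              rw [he]
              calc ∫ y, (ξ0 y - ξ0 y) ^ 2 ∂μ = 0 := by simp
                _ ≤ δ t := hδnn t
          exact mul_le_mul_of_nonneg_left hmid hCc0
        calc Real.sqrt (∫ x : Fin n → X, ((t - θ₀ i) * ∏ m', G2 k m m' (x m')) ^ 2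
              ∂(Measure.pi fun _ : Fin n => μ))
            = |t - θ₀ i| * Real.sqrt (∏ m', ∫ y, G2 k m m' y ^ 2 ∂μ) := by
              rw [h1, Real.sqrt_mul (sq_nonneg _), Real.sqrt_sq_eq_abs]
          _ ≤ |t - θ₀ i| * (Real.sqrt Cc * Real.sqrt (δ t)) := by
              refine mul_le_mul_of_nonneg_left ?_ (abs_nonneg _)
              rw [← Real.sqrt_mul hCc0]
              exact Real.sqrt_le_sqrt h2
      -- Minkowski chain
      have hmink : Real.sqrt (∫ x : Fin n → X,
            ((∏ k, Real.sqrt (f (Function.update θ₀ i t) (x k)))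
            - (∏ k, Real.sqrt (f θ₀ (x k)))
            - (t - θ₀ i) * ∑ k, D i (x k)
                * ∏ k' ∈ Finset.univ.erase k, Real.sqrt (f θ₀ (x k'))) ^ 2
            ∂(Measure.pi fun _ : Fin n => μ))
          ≤ (n : ℝ) * Real.sqrt (ε t)
            + (n : ℝ) ^ 2 * (|t - θ₀ i| * (Real.sqrt Cc * Real.sqrt (δ t))) := by
        have hre : (∫ x : Fin n → X,
            ((∏ k, Real.sqrt (f (Function.update θ₀ i t) (x k)))
            - (∏ k, Real.sqrt (f θ₀ (x k)))
            - (t - θ₀ i) * ∑ k, D i (x k)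
                * ∏ k' ∈ Finset.univ.erase k, Real.sqrt (f θ₀ (x k'))) ^ 2
            ∂(Measure.pi fun _ : Fin n => μ))
            = ∫ x : Fin n → X, ((∑ k, ∏ m, G1 k m (x m))
              + ∑ k, ∑ m ∈ Finset.univ.erase k, (t - θ₀ i) * ∏ m', G2 k m m' (x m')) ^ 2
              ∂(Measure.pi fun _ : Fin n => μ) :=
          integral_congr_ae (Eventually.of_forall fun x => by simp only [hpoint x])
        rw [hre]
        have hBmem : MemLp (fun x : Fin n → X =>
            ∑ k, ∑ m ∈ Finset.univ.erase k, (t - θ₀ i) * ∏ m', G2 k m m' (x m')) 2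
            (Measure.pi fun _ : Fin n => μ) :=
          memLp_finsum _ _ fun k _ => memLp_finsum _ _ fun m _ => hUmem k m
        have hAmem : MemLp (fun x : Fin n → X => ∑ k, ∏ m, G1 k m (x m)) 2
            (Measure.pi fun _ : Fin n => μ) := memLp_finsum _ _ fun k _ => hT1mem k
        calc Real.sqrt (∫ x : Fin n → X, ((∑ k, ∏ m, G1 k m (x m))
              + ∑ k, ∑ m ∈ Finset.univ.erase k, (t - θ₀ i) * ∏ m', G2 k m m' (x m')) ^ 2
              ∂(Measure.pi fun _ : Fin n => μ))
            ≤ Real.sqrt (∫ x : Fin n → X, (∑ k, ∏ m, G1 k m (x m)) ^ 2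
                ∂(Measure.pi fun _ : Fin n => μ))
              + Real.sqrt (∫ x : Fin n → X,
                (∑ k, ∑ m ∈ Finset.univ.erase k, (t - θ₀ i) * ∏ m', G2 k m m' (x m')) ^ 2
                ∂(Measure.pi fun _ : Fin n => μ)) :=
              sqrt_integral_sq_add_le _ _ hAmem hBmem
          _ ≤ (n : ℝ) * Real.sqrt (ε t)
              + (n : ℝ) ^ 2 * (|t - θ₀ i| * (Real.sqrt Cc * Real.sqrt (δ t))) := by
              gcongr  -- splits into the two summands?
              · -- first summand
                calc Real.sqrt (∫ x : Fin n → X, (∑ k, ∏ m, G1 k m (x m)) ^ 2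
                    ∂(Measure.pi fun _ : Fin n => μ))
                    ≤ ∑ k : Fin n, Real.sqrt (∫ x : Fin n → X, (∏ m, G1 k m (x m)) ^ 2
                        ∂(Measure.pi fun _ : Fin n => μ)) :=
                      sqrt_integral_sq_sum_le _ _ fun k _ => hT1mem k
                  _ = (n : ℝ) * Real.sqrt (ε t) := by
                      rw [Finset.sum_congr rfl fun k _ => by rw [hT1sq k]]
                      rw [Finset.sum_const, Finset.card_univ, Fintype.card_fin, nsmul_eq_mul]
              · -- second summand
                calc Real.sqrt (∫ x : Fin n → X,
                    (∑ k, ∑ m ∈ Finset.univ.erase k, (t - θ₀ i) * ∏ m', G2 k m m' (x m')) ^ 2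
                    ∂(Measure.pi fun _ : Fin n => μ))
                    ≤ ∑ k : Fin n, Real.sqrt (∫ x : Fin n → X,
                        (∑ m ∈ Finset.univ.erase k, (t - θ₀ i) * ∏ m', G2 k m m' (x m')) ^ 2
                        ∂(Measure.pi fun _ : Fin n => μ)) :=
                      sqrt_integral_sq_sum_le _ _ fun k _ =>
                        memLp_finsum _ _ fun m _ => hUmem k m
                  _ ≤ ∑ k : Fin n, ∑ m ∈ Finset.univ.erase k,
                        Real.sqrt (∫ x : Fin n → X,
                          ((t - θ₀ i) * ∏ m', G2 k m m' (x m')) ^ 2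
                          ∂(Measure.pi fun _ : Fin n => μ)) :=
                      Finset.sum_le_sum fun k _ =>
                        sqrt_integral_sq_sum_le _ _ fun m _ => hUmem k m
                  _ ≤ ∑ k : Fin n, ∑ m ∈ Finset.univ.erase k,
                        |t - θ₀ i| * (Real.sqrt Cc * Real.sqrt (δ t)) :=
                      Finset.sum_le_sum fun k _ => Finset.sum_le_sum fun m hm => hUsq k m hm
                  _ ≤ (n : ℝ) ^ 2 * (|t - θ₀ i| * (Real.sqrt Cc * Real.sqrt (δ t))) := by
                      have hb0 : 0 ≤ |t - θ₀ i| * (Real.sqrt Cc * Real.sqrt (δ t)) := by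
                        positivity
                      have hcard : ∀ k : Fin n,
                          ∑ m ∈ Finset.univ.erase k,
                            |t - θ₀ i| * (Real.sqrt Cc * Real.sqrt (δ t))
                          ≤ (n : ℝ) * (|t - θ₀ i| * (Real.sqrt Cc * Real.sqrt (δ t))) := by
                        intro k
                        rw [Finset.sum_const, nsmul_eq_mul]
                        refine mul_le_mul_of_nonneg_right ?_ hb0
                        have : ((Finset.univ.erase k).card : ℝ) ≤ (n : ℝ) := by
                          have h := Finset.card_erase_le (s := (Finset.univ : Finset (Fin n))) (a := k)
                          have h2 : (Finset.univ : Finset (Fin n)).card = n := by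
                            rw [Finset.card_univ, Fintype.card_fin]
                          exact_mod_cast h.trans (le_of_eq h2)
                        exact this
                      calc ∑ k : Fin n, ∑ m ∈ Finset.univ.erase k,
                            |t - θ₀ i| * (Real.sqrt Cc * Real.sqrt (δ t))
                          ≤ ∑ k : Fin n, (n : ℝ) * (|t - θ₀ i| * (Real.sqrt Cc * Real.sqrt (δ t))) :=
                            Finset.sum_le_sum fun k _ => hcard k
                        _ = (n : ℝ) ^ 2 * (|t - θ₀ i| * (Real.sqrt Cc * Real.sqrt (δ t))) := by
                            rw [Finset.sum_const, Finset.card_univ, Fintype.card_fin, nsmul_eq_mul]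
                            ring
      -- conclude
      have hFnn : 0 ≤ ∫ x : Fin n → X,
          ((∏ k, Real.sqrt (f (Function.update θ₀ i t) (x k)))
            - (∏ k, Real.sqrt (f θ₀ (x k)))
            - (t - θ₀ i) * ∑ k, D i (x k)
                * ∏ k' ∈ Finset.univ.erase k, Real.sqrt (f θ₀ (x k'))) ^ 2
          ∂(Measure.pi fun _ : Fin n => μ) := integral_nonneg fun x => sq_nonneg _
      have h5 : Real.sqrt (∫ x : Fin n → X,
            ((∏ k, Real.sqrt (f (Function.update θ₀ i t) (x k)))
            - (∏ k, Real.sqrt (f θ₀ (x k)))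
            - (t - θ₀ i) * ∑ k, D i (x k)
                * ∏ k' ∈ Finset.univ.erase k, Real.sqrt (f θ₀ (x k'))) ^ 2
            ∂(Measure.pi fun _ : Fin n => μ)) / |t - θ₀ i|
          ≤ (n : ℝ) * Real.sqrt (ε t / (t - θ₀ i) ^ 2)
            + (n : ℝ) ^ 2 * (Real.sqrt Cc * Real.sqrt (δ t)) := by
        calc Real.sqrt (∫ x : Fin n → X,
              ((∏ k, Real.sqrt (f (Function.update θ₀ i t) (x k)))
              - (∏ k, Real.sqrt (f θ₀ (x k)))
              - (t - θ₀ i) * ∑ k, D i (x k)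
                  * ∏ k' ∈ Finset.univ.erase k, Real.sqrt (f θ₀ (x k'))) ^ 2
              ∂(Measure.pi fun _ : Fin n => μ)) / |t - θ₀ i|
            ≤ ((n : ℝ) * Real.sqrt (ε t)
              + (n : ℝ) ^ 2 * (|t - θ₀ i| * (Real.sqrt Cc * Real.sqrt (δ t)))) / |t - θ₀ i| := by
              gcongr
          _ = (n : ℝ) * (Real.sqrt (ε t) / |t - θ₀ i|)
              + (n : ℝ) ^ 2 * (Real.sqrt Cc * Real.sqrt (δ t)) := by
              field_simp
          _ = (n : ℝ) * Real.sqrt (ε t / (t - θ₀ i) ^ 2)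
              + (n : ℝ) ^ 2 * (Real.sqrt Cc * Real.sqrt (δ t)) := by
              rw [Real.sqrt_div (hεnn t), Real.sqrt_sq_eq_abs]
      have h6 : (∫ x : Fin n → X,
            ((∏ k, Real.sqrt (f (Function.update θ₀ i t) (x k)))
            - (∏ k, Real.sqrt (f θ₀ (x k)))
            - (t - θ₀ i) * ∑ k, D i (x k)
                * ∏ k' ∈ Finset.univ.erase k, Real.sqrt (f θ₀ (x k'))) ^ 2
            ∂(Measure.pi fun _ : Fin n => μ)) / (t - θ₀ i) ^ 2
          = (Real.sqrt (∫ x : Fin n → X,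
            ((∏ k, Real.sqrt (f (Function.update θ₀ i t) (x k)))
            - (∏ k, Real.sqrt (f θ₀ (x k)))
            - (t - θ₀ i) * ∑ k, D i (x k)
                * ∏ k' ∈ Finset.univ.erase k, Real.sqrt (f θ₀ (x k'))) ^ 2
            ∂(Measure.pi fun _ : Fin n => μ)) / |t - θ₀ i|) ^ 2 := by
        rw [div_pow, Real.sq_sqrt hFnn, sq_abs]
      rw [h6]
      exact pow_le_pow_left₀ (div_nonneg (Real.sqrt_nonneg _) (abs_nonneg _)) h5 2
    refine squeeze_zero' ?_ hmain t6
    exact Eventually.of_forall fun t => div_nonneg (integral_nonneg fun x => sq_nonneg _) (sq_nonneg _)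
  · -- Part 2 : Fisher information of the product model
    intro i j
    have hsingle : ∀ (E : X → ℝ) (k : Fin n) (x : Fin n → X),
        E (x k) * ∏ k' ∈ Finset.univ.erase k, Real.sqrt (f θ₀ (x k'))
        = ∏ m, (if m = k then E else fun y => Real.sqrt (f θ₀ y)) (x m) := by
      intro E k x
      rw [← Finset.mul_prod_erase Finset.univ
        (fun m => (if m = k then E else fun y => Real.sqrt (f θ₀ y)) (x m)) (Finset.mem_univ k),
        if_pos rfl]
      congr 1
      refine Finset.prod_congr rfl fun m hm => ?_
      rw [if_neg (Finset.mem_erase.mp hm).1]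
    have hGmem : ∀ (i' : Fin p) (k m : Fin n),
        MemLp ((if m = k then D i' else fun y => Real.sqrt (f θ₀ y))) 2 μ := by
      intro i' k m
      split_ifs
      · exact hD i'
      · exact hmem _ hθ₀
    have hpt : ∀ x : Fin n → X,
        (∑ k, D i (x k) * ∏ k' ∈ Finset.univ.erase k, Real.sqrt (f θ₀ (x k')))
          * (∑ k, D j (x k) * ∏ k' ∈ Finset.univ.erase k, Real.sqrt (f θ₀ (x k')))
        = ∑ k, ∑ l, ∏ m, (((if m = k then D i else fun y => Real.sqrt (f θ₀ y)) (x m))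
            * ((if m = l then D j else fun y => Real.sqrt (f θ₀ y)) (x m))) := by
      intro x
      rw [Finset.sum_mul_sum]
      refine Finset.sum_congr rfl fun k _ => Finset.sum_congr rfl fun l _ => ?_
      rw [hsingle (D i) k x, hsingle (D j) l x, ← Finset.prod_mul_distrib]
    have hint2 : ∀ k l : Fin n, Integrable (fun x : Fin n → X =>
        ∏ m, (((if m = k then D i else fun y => Real.sqrt (f θ₀ y)) (x m))
            * ((if m = l then D j else fun y => Real.sqrt (f θ₀ y)) (x m))))
        (Measure.pi fun _ : Fin n => μ) := by
      intro k l
      exact tensor_integrable μ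
        (fun m y => ((if m = k then D i else fun y => Real.sqrt (f θ₀ y)) y)
          * ((if m = l then D j else fun y => Real.sqrt (f θ₀ y)) y))
        (fun m => L2.mul_integrable μ (hGmem i k m) (hGmem j l m))
    have hval : ∀ k l : Fin n,
        (∫ x : Fin n → X, ∏ m, (((if m = k then D i else fun y => Real.sqrt (f θ₀ y)) (x m))
            * ((if m = l then D j else fun y => Real.sqrt (f θ₀ y)) (x m)))
          ∂(Measure.pi fun _ : Fin n => μ))
        = if k = l then ∫ y, D i y * D j y ∂μ else 0 := by
      intro k l
      rw [tensor_integral μ (fun m y => ((if m = k then D i else fun y => Real.sqrt (f θ₀ y)) y)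
          * ((if m = l then D j else fun y => Real.sqrt (f θ₀ y)) y))]
      by_cases hkl : k = l
      · subst hkl
        rw [if_pos rfl, ← Finset.mul_prod_erase Finset.univ _ (Finset.mem_univ k)]
        have h1 : ∫ y, ((if k = k then D i else fun y => Real.sqrt (f θ₀ y)) y)
            * ((if k = k then D j else fun y => Real.sqrt (f θ₀ y)) y) ∂μ
            = ∫ y, D i y * D j y ∂μ := by rw [if_pos rfl, if_pos rfl]
        rw [h1]
        have h2 : ∀ m ∈ Finset.univ.erase k, (∫ y,
            ((if m = k then D i else fun y => Real.sqrt (f θ₀ y)) y)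
            * ((if m = k then D j else fun y => Real.sqrt (f θ₀ y)) y) ∂μ) = 1 := by
          intro m hm
          rw [if_neg (Finset.mem_erase.mp hm).1, if_neg (Finset.mem_erase.mp hm).1]
          exact hxixi
        rw [Finset.prod_congr rfl h2, Finset.prod_const_one, mul_one]
      · rw [if_neg hkl]
        refine Finset.prod_eq_zero (Finset.mem_univ k) ?_
        rw [if_pos rfl, if_neg hkl]
        exact hDxi i

    calc 4 * (∫ x : Fin n → X,
          (∑ k, D i (x k) * ∏ k' ∈ Finset.univ.erase k, Real.sqrt (f θ₀ (x k')))
          * (∑ k, D j (x k) * ∏ k' ∈ Finset.univ.erase k, Real.sqrt (f θ₀ (x k')))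
          ∂(Measure.pi fun _ : Fin n => μ))
        = 4 * ∑ k, ∑ l, (∫ x : Fin n → X,
            ∏ m, (((if m = k then D i else fun y => Real.sqrt (f θ₀ y)) (x m))
            * ((if m = l then D j else fun y => Real.sqrt (f θ₀ y)) (x m)))
          ∂(Measure.pi fun _ : Fin n => μ)) := by
          rw [integral_congr_ae (Eventually.of_forall hpt),
            integral_finset_sum _ (fun k _ => integrable_finset_sum _ (fun l _ => hint2 k l))]
          congr 1
          refine Finset.sum_congr rfl fun k _ => ?_
          rw [integral_finset_sum _ (fun l _ => hint2 k l)]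
      _ = 4 * ∑ k : Fin n, ∑ l : Fin n, (if k = l then ∫ y, D i y * D j y ∂μ else 0) := by
          congr 1
          exact Finset.sum_congr rfl fun k _ => Finset.sum_congr rfl fun l _ => hval k l
      _ = 4 * ∑ k : Fin n, ∫ y, D i y * D j y ∂μ := by
          congr 1
          refine Finset.sum_congr rfl fun k _ => ?_
          exact Finset.sum_ite_eq Finset.univ k (fun _ => ∫ y, D i y * D j y ∂μ)
            |>.trans (if_pos (Finset.mem_univ k))
      _ = n * (4 * ∫ y, D i y * D j y ∂μ) := by
          rw [Finset.sum_const, Finset.card_univ, Fintype.card_fin, nsmul_eq_mul]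
          ring
end
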